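/- arXiv:2408.10049 — 8 statements merged into one kernel-verified Lean document; each statement's English description precedes it below -/
import Mathlib

section
/- The active-surjective maps and the injective maps form an orthogonal factorization system on the category of necklaces: every necklace map f: (T,p) → (U,q) factors uniquely as an active surjective necklace map followed by an injective necklace map. -/
/-- (Active surjective, injective) is an orthogonal factorization system on the
category of necklaces: every necklace map `f : (T,p) → (U,q)` factors uniquely
as an active surjective necklace map `g : (T,p) → (V,r)` followed by an
injective necklace map `h : (V,r) → (U,q)`. -/
theorem necklace_activeSurjective_injective_factorization
    (p q : ℕ) (T : Finset (Fin (p + 1))) (U : Finset (Fin (q + 1)))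
    (h0T : 0 ∈ T) (hpT : Fin.last p ∈ T) (h0U : 0 ∈ U) (hqU : Fin.last q ∈ U)
    (f : Fin (p + 1) →o Fin (q + 1)) (hf0 : f 0 = 0) (hfl : f (Fin.last p) = Fin.last q)
    (hsub : U ⊆ T.image f) :
    ∃! x : Σ r : ℕ, Finset (Fin (r + 1)) × (Fin (p + 1) →o Fin (r + 1)) × (Fin (r + 1) →o Fin (q + 1)),
      -- the middle object (V, r) is a necklace
      (0 ∈ x.2.1 ∧ Fin.last x.1 ∈ x.2.1) ∧
      -- g is an active surjective necklace map (T,p) → (V,r)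
      x.2.2.1 0 = 0 ∧ x.2.2.1 (Fin.last p) = Fin.last x.1 ∧
      Function.Surjective x.2.2.1 ∧ T.image x.2.2.1 = x.2.1 ∧
      -- h is an injective necklace map (V,r) → (U,q)
      x.2.2.2 0 = 0 ∧ x.2.2.2 (Fin.last x.1) = Fin.last q ∧
      Function.Injective x.2.2.2 ∧ U ⊆ x.2.1.image x.2.2.2 ∧
      -- h ∘ g = f
      (∀ i, x.2.2.2 (x.2.2.1 i) = f i) := by
  classical
  set S : Finset (Fin (q+1)) := Finset.univ.image f with hS
  have hmem : ∀ i, f i ∈ S := fun i => Finset.mem_image_of_mem f (Finset.mem_univ i)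
  have hSpos : 0 < S.card := Finset.card_pos.mpr ⟨f 0, hmem 0⟩
  set r : ℕ := S.card - 1 with hrdef
  have hr : S.card = r + 1 := (Nat.succ_pred_eq_of_pos hSpos).symm
  set e : Fin (r+1) ≃o {x // x ∈ S} := S.orderIsoOfFin hr with he
  have h0S : (0 : Fin (q+1)) ∈ S := hf0 ▸ hmem 0
  have hlS : Fin.last q ∈ S := hfl ▸ hmem (Fin.last p)
  -- g and h
  set g : Fin (p+1) →o Fin (r+1) :=
    ⟨fun i => e.symm ⟨f i, hmem i⟩, fun i j hij => e.symm.monotone (f.monotone hij)⟩ with hg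
  set h : Fin (r+1) →o Fin (q+1) :=
    ⟨fun j => (e j).1, fun i j hij => e.monotone hij⟩ with hh
  have hcomp : ∀ i, h (g i) = f i := by
    intro i; show (e (e.symm ⟨f i, hmem i⟩)).1 = f i; simp
  have hginj : Function.Injective h := fun a b hab =>
    e.injective (Subtype.ext hab)
  have hgsurj : Function.Surjective g := by
    intro j
    obtain ⟨i, -, hi⟩ := Finset.mem_image.mp (e j).2
    refine ⟨i, ?_⟩
    show e.symm ⟨f i, hmem i⟩ = j
    rw [show (⟨f i, hmem i⟩ : {x // x ∈ S}) = e j from Subtype.ext hi]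
    exact e.symm_apply_apply j
  have he0 : e 0 = ⟨0, h0S⟩ := by
    have h1 : e.symm ⟨0, h0S⟩ ≤ 0 := by
      have : (⟨0, h0S⟩ : {x // x ∈ S}) ≤ e 0 := Fin.zero_le _
      simpa using e.symm.monotone this
    have : e.symm ⟨0, h0S⟩ = 0 := le_antisymm h1 (Fin.zero_le _)
    rw [← this, e.apply_symm_apply]
  have hel : e (Fin.last r) = ⟨Fin.last q, hlS⟩ := by
    have h1 : Fin.last r ≤ e.symm ⟨Fin.last q, hlS⟩ := by
      have : e (Fin.last r) ≤ ⟨Fin.last q, hlS⟩ := Fin.le_last _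
      simpa using e.symm.monotone this
    have : e.symm ⟨Fin.last q, hlS⟩ = Fin.last r := le_antisymm (Fin.le_last _) h1
    rw [← this, e.apply_symm_apply]
  have hg0 : g 0 = 0 := by
    show e.symm ⟨f 0, hmem 0⟩ = 0
    rw [show (⟨f 0, hmem 0⟩ : {x // x ∈ S}) = e 0 by rw [he0]; exact Subtype.ext hf0]
    exact e.symm_apply_apply 0
  have hgl : g (Fin.last p) = Fin.last r := by
    show e.symm ⟨f (Fin.last p), hmem _⟩ = Fin.last r
    rw [show (⟨f (Fin.last p), hmem _⟩ : {x // x ∈ S}) = e (Fin.last r) by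
      rw [hel]; exact Subtype.ext hfl]
    exact e.symm_apply_apply _
  have hh0 : h 0 = 0 := by show (e 0).1 = 0; simp [he0]
  have hhl : h (Fin.last r) = Fin.last q := by show (e (Fin.last r)).1 = Fin.last q; simp [hel]
  set V : Finset (Fin (r+1)) := T.image g with hV
  have h0V : (0 : Fin (r+1)) ∈ V := hg0 ▸ Finset.mem_image_of_mem g h0T
  have hlV : Fin.last r ∈ V := hgl ▸ Finset.mem_image_of_mem g hpT
  have hUsub : U ⊆ V.image h := by
    intro u hu
    obtain ⟨t, ht, hft⟩ := Finset.mem_image.mp (hsub hu)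
    exact Finset.mem_image.mpr ⟨g t, Finset.mem_image_of_mem g ht, by rw [hcomp t, hft]⟩
  refine ⟨⟨r, V, g, h⟩, ⟨⟨?_, ?_⟩, ?_, ?_, ?_, ?_, ?_, ?_, ?_, ?_, ?_⟩, ?_⟩
  · exact h0V
  · exact hlV
  · exact hg0
  · exact hgl
  · exact hgsurj
  · rfl
  · exact hh0
  · exact hhl
  · exact hginj
  · exact hUsub
  · exact hcomp
  rintro ⟨r', V', g', h'⟩ ⟨⟨h0V', hlV'⟩, hg0', hgl', hgsurj', hVim', hh0', hhl', hinj', hUsub', hcomp'⟩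
  -- first: image of h' is S
  have himg : Finset.univ.image (h' : Fin (r'+1) → Fin (q+1)) = S := by
    ext a
    simp only [Finset.mem_image, Finset.mem_univ, true_and, hS]
    constructor
    · rintro ⟨j, rfl⟩
      obtain ⟨i, rfl⟩ := hgsurj' j
      exact ⟨i, (hcomp' i).symm⟩
    · rintro ⟨i, rfl⟩
      exact ⟨g' i, hcomp' i⟩
  have hr' : r' = r := by
    have := Finset.card_image_of_injective (Finset.univ : Finset (Fin (r'+1))) hinj'
    rw [himg, hr, Finset.card_univ, Fintype.card_fin] at this
    omega
  subst hr'
  -- h' = h by strict monotonicity with image S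
  have hsm' : StrictMono (h' : Fin (r+1) → Fin (q+1)) := h'.monotone.strictMono_of_injective hinj'
  have hsm : StrictMono (h : Fin (r+1) → Fin (q+1)) := h.monotone.strictMono_of_injective hginj
  have hmemS' : ∀ x, h' x ∈ S := by
    intro x; rw [← himg]; exact Finset.mem_image_of_mem _ (Finset.mem_univ x)
  have hmemSh : ∀ x, h x ∈ S := fun x => (e x).2
  have hhh : (h' : Fin (r+1) → Fin (q+1)) = h := by
    rw [Finset.orderEmbOfFin_unique hr hmemS' hsm', Finset.orderEmbOfFin_unique hr hmemSh hsm]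
  have hheq : h' = h := OrderHom.ext _ _ hhh
  subst hheq
  have hgeq : g' = g := by
    apply OrderHom.ext
    funext i
    exact hginj (by rw [hcomp' i, hcomp i])
  subst hgeq
  have : V' = V := hVim'.symm
  subst this
  rfl
end

section
/- Let ι: Nec₋ → Nec be the inclusion of the subcategory of active surjective necklace maps, and let D': Nec₋ → V be a functor into a cocomplete category V. Then for every necklace T, the left Kan extension of D' along ι evaluated at T is naturally isomorphic to the coproduct of D'(U) over all injective necklace maps U ↪ T: (Lan_ι D')(T) ≅ ⨿_{U ↪ T injective} D'(U). -/
open CategoryTheory CategoryTheory.Limits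

/-- A necklace `(T,p)`: a subset of `[p] = {0,…,p}` (encoded inside `Fin (p+1)`)
containing both endpoints. -/
structure Neck : Type where
  p : ℕ
  T : Finset (Fin (p + 1))
  zero_mem : 0 ∈ T
  last_mem : Fin.last p ∈ T

/-- A necklace map: a monotone endpoint-preserving map with `Y.T ⊆ f(X.T)`. -/
@[ext]
structure NeckHom (X Y : Neck) : Type where
  toFun : Fin (X.p + 1) →o Fin (Y.p + 1)
  map_zero : toFun 0 = 0
  map_last : toFun (Fin.last X.p) = Fin.last Y.p
  joints : Y.T ⊆ X.T.image toFun

/-- The identity necklace map. -/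
def NeckHom.id' (X : Neck) : NeckHom X X :=
  ⟨OrderHom.id, rfl, rfl, by simp⟩

/-- Composition of necklace maps. -/
def NeckHom.comp' {X Y Z : Neck} (f : NeckHom X Y) (g : NeckHom Y Z) : NeckHom X Z :=
  ⟨g.toFun.comp f.toFun,
    by show g.toFun (f.toFun 0) = 0; rw [f.map_zero, g.map_zero],
    by show g.toFun (f.toFun _) = _; rw [f.map_last, g.map_last],
    by
      refine g.joints.trans ?_
      refine (Finset.image_subset_image f.joints).trans ?_
      rw [Finset.image_image]
      exact Finset.Subset.refl _⟩

/-- The category `Nec` of necklaces. -/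
instance : Category Neck where
  Hom := NeckHom
  id := NeckHom.id'
  comp f g := f.comp' g
  id_comp f := NeckHom.ext rfl
  comp_id f := NeckHom.ext rfl
  assoc f g h := NeckHom.ext rfl

/-- The objects of the wide subcategory `Nec₋` of active surjective necklace
maps. -/
structure NeckM : Type where
  obj : Neck

/-- Active surjective necklace maps. -/
def ActSurj {X Y : Neck} (f : NeckHom X Y) : Prop :=
  Function.Surjective f.toFun ∧ Y.T = X.T.image f.toFun

/-- Morphisms of `Nec₋`. -/
def NeckMHom (X Y : NeckM) : Type :=
  {f : NeckHom X.obj Y.obj // ActSurj f}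

/-- The wide subcategory `Nec₋ ⊆ Nec` of active surjective necklace maps. -/
instance : Category NeckM where
  Hom := NeckMHom
  id X := ⟨NeckHom.id' X.obj, Function.surjective_id, by
    show X.obj.T = X.obj.T.image ⇑OrderHom.id
    simp⟩
  comp {X Y Z} f g :=
    ⟨f.1.comp' g.1, g.2.1.comp f.2.1, by
      show Z.obj.T = X.obj.T.image ⇑(g.1.toFun.comp f.1.toFun)
      rw [g.2.2, f.2.2, Finset.image_image]
      rfl⟩
  id_comp f := Subtype.ext (NeckHom.ext rfl)
  comp_id f := Subtype.ext (NeckHom.ext rfl)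
  assoc f g h := Subtype.ext (NeckHom.ext rfl)

/-- The inclusion `ι : Nec₋ ↪ Nec`. -/
def iota : NeckM ⥤ Neck where
  obj X := X.obj
  map f := Subtype.val f
  map_id X := rfl
  map_comp f g := rfl


section Factorization

open Function

/-- The range of a necklace map's underlying map, as a finset. -/
def NeckFactor.rng {X Y : Neck} (f : NeckHom X Y) : Finset (Fin (Y.p + 1)) :=
  Finset.image f.toFun Finset.univ

lemma NeckFactor.rng_card_pos {X Y : Neck} (f : NeckHom X Y) : 0 < (NeckFactor.rng f).card :=
  Finset.card_pos.2 ⟨f.toFun 0, Finset.mem_image_of_mem _ (Finset.mem_univ _)⟩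

/-- The size (minus one) of the range. -/
def NeckFactor.r {X Y : Neck} (f : NeckHom X Y) : ℕ := (NeckFactor.rng f).card - 1

lemma NeckFactor.rng_card {X Y : Neck} (f : NeckHom X Y) :
    (NeckFactor.rng f).card = NeckFactor.r f + 1 :=
  (Nat.succ_pred_eq_of_pos (NeckFactor.rng_card_pos f)).symm

/-- The injective part of the factorization. -/
def NeckFactor.mFun {X Y : Neck} (f : NeckHom X Y) :
    Fin (NeckFactor.r f + 1) ↪o Fin (Y.p + 1) :=
  (NeckFactor.rng f).orderEmbOfFin (NeckFactor.rng_card f)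

/-- The surjective part of the factorization. -/
def NeckFactor.eFun {X Y : Neck} (f : NeckHom X Y) (x : Fin (X.p + 1)) :
    Fin (NeckFactor.r f + 1) :=
  ((NeckFactor.rng f).orderIsoOfFin (NeckFactor.rng_card f)).symm
    ⟨f.toFun x, Finset.mem_image_of_mem _ (Finset.mem_univ x)⟩

namespace NeckFactor

variable {X Y : Neck} (f : NeckHom X Y)

lemma m_e (x : Fin (X.p + 1)) : mFun f (eFun f x) = f.toFun x := by
  have h := ((rng f).orderIsoOfFin (rng_card f)).apply_symm_apply
    ⟨f.toFun x, Finset.mem_image_of_mem _ (Finset.mem_univ x)⟩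
  have h2 := Finset.coe_orderIsoOfFin_apply (rng f) (rng_card f) (eFun f x)
  rw [show ((rng f).orderIsoOfFin (rng_card f)) (eFun f x)
      = ⟨f.toFun x, Finset.mem_image_of_mem _ (Finset.mem_univ x)⟩ from h] at h2
  exact h2.symm

lemma eFun_mono : Monotone (eFun f) := by
  intro x y hxy
  exact ((rng f).orderIsoOfFin (rng_card f)).symm.monotone
    (show (⟨f.toFun x, _⟩ : rng f) ≤ ⟨f.toFun y, _⟩ from f.toFun.monotone hxy)

lemma eFun_surj : Surjective (eFun f) := by
  intro y
  have hy : mFun f y ∈ rng f := Finset.orderEmbOfFin_mem _ _ _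
  obtain ⟨x, -, hx⟩ := Finset.mem_image.1 hy
  refine ⟨x, ?_⟩
  have : (⟨f.toFun x, Finset.mem_image_of_mem _ (Finset.mem_univ x)⟩ : rng f)
      = ((rng f).orderIsoOfFin (rng_card f)) y := by
    apply Subtype.ext
    rw [Finset.coe_orderIsoOfFin_apply]
    exact hx
  unfold eFun
  rw [this, OrderIso.symm_apply_apply]

lemma eFun_zero : eFun f 0 = 0 := by
  obtain ⟨x, hx⟩ := eFun_surj f 0
  exact le_antisymm (hx ▸ eFun_mono f (Fin.zero_le x)) (Fin.zero_le _)

lemma eFun_last : eFun f (Fin.last X.p) = Fin.last (r f) := by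
  obtain ⟨x, hx⟩ := eFun_surj f (Fin.last (r f))
  exact le_antisymm (Fin.le_last _) (hx ▸ eFun_mono f (Fin.le_last x))

lemma mFun_zero : mFun f 0 = 0 := by
  have := m_e f 0
  rw [eFun_zero f] at this
  rw [this, f.map_zero]

lemma mFun_last : mFun f (Fin.last (r f)) = Fin.last Y.p := by
  have := m_e f (Fin.last X.p)
  rw [eFun_last f] at this
  rw [this, f.map_last]

/-- The middle necklace of the factorization. -/
def mid : Neck where
  p := r f
  T := X.T.image (eFun f)
  zero_mem := Finset.mem_image.2 ⟨0, X.zero_mem, eFun_zero f⟩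
  last_mem := Finset.mem_image.2 ⟨Fin.last X.p, X.last_mem, eFun_last f⟩

/-- The surjective part as a necklace map. -/
def eHom : NeckHom X (mid f) :=
  ⟨⟨eFun f, eFun_mono f⟩, eFun_zero f, eFun_last f, Finset.Subset.refl _⟩

/-- The injective part as a necklace map. -/
def mHom : NeckHom (mid f) Y :=
  ⟨⟨mFun f, (mFun f).monotone⟩, mFun_zero f, mFun_last f, by
    show Y.T ⊆ (X.T.image (eFun f)).image (mFun f)
    rw [Finset.image_image]
    have h : (⇑(mFun f) ∘ eFun f) = ⇑f.toFun := funext (m_e f)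
    rw [h]
    exact f.joints⟩

end NeckFactor

end Factorization


namespace NeckFactor

variable {X Y : Neck} (f : NeckHom X Y)

lemma comp_eq : (eHom f).comp' (mHom f) = f := by
  apply NeckHom.ext
  apply OrderHom.ext
  exact funext (m_e f)

lemma eHom_actSurj : ActSurj (eHom f) := ⟨eFun_surj f, rfl⟩

lemma mHom_inj : Function.Injective (mHom f).toFun := (mFun f).injective

/-- Two strictly monotone maps between `Fin`s with equal ranges are (h)equal. -/
lemma strictMono_heq {a b q : ℕ} {m : Fin (a + 1) → Fin (q + 1)} {m' : Fin (b + 1) → Fin (q + 1)}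
    (hm : StrictMono m) (hm' : StrictMono m')
    (hr : Finset.image m Finset.univ = Finset.image m' Finset.univ) :
    a = b ∧ HEq m m' := by
  have hc : (Finset.image m Finset.univ).card = a + 1 := by
    rw [Finset.card_image_of_injective _ hm.injective, Finset.card_univ, Fintype.card_fin]
  have hc' : (Finset.image m' Finset.univ).card = b + 1 := by
    rw [Finset.card_image_of_injective _ hm'.injective, Finset.card_univ, Fintype.card_fin]
  have hab : a = b := by
    have := hc.symm.trans (hr ▸ hc')
    omega
  subst hab
  refine ⟨rfl, heq_of_eq ?_⟩
  have h1 : m = (Finset.image m Finset.univ).orderEmbOfFin hc :=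
    Finset.orderEmbOfFin_unique hc (fun x => Finset.mem_image_of_mem _ (Finset.mem_univ x)) hm
  have h2 : m' = (Finset.image m Finset.univ).orderEmbOfFin hc :=
    Finset.orderEmbOfFin_unique hc
      (fun x => hr ▸ Finset.mem_image_of_mem _ (Finset.mem_univ x)) hm'
  rw [h1, h2]

/-- Uniqueness of active-surjective / injective factorizations. -/
lemma factor_unique {W W' : Neck} (e : NeckHom X W) (m : NeckHom W Y)
    (e' : NeckHom X W') (m' : NeckHom W' Y)
    (he : ActSurj e) (he' : ActSurj e')
    (hm : Function.Injective m.toFun) (hm' : Function.Injective m'.toFun)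
    (hc : e.comp' m = e'.comp' m') :
    W = W' ∧ HEq e e' ∧ HEq m m' := by
  have hcc : ∀ x, m.toFun (e.toFun x) = m'.toFun (e'.toFun x) := by
    intro x
    have := congrArg (fun g : NeckHom X Y => g.toFun x) hc
    exact this
  have hr : Finset.image (⇑m.toFun) Finset.univ = Finset.image (⇑m'.toFun) Finset.univ := by
    rw [← Finset.image_univ_of_surjective he.1, ← Finset.image_univ_of_surjective he'.1,
      Finset.image_image, Finset.image_image]
    exact Finset.image_congr (fun x _ => hcc x)
  obtain ⟨hp, hmm⟩ := strictMono_heq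
    (m.toFun.monotone.strictMono_of_injective hm)
    (m'.toFun.monotone.strictMono_of_injective hm') hr
  obtain ⟨p, Tw, z, l⟩ := W
  obtain ⟨p', Tw', z', l'⟩ := W'
  simp only at hp
  subst hp
  have hmf : (⇑m.toFun : Fin (p + 1) → Fin (Y.p + 1)) = ⇑m'.toFun := eq_of_heq hmm
  have hef : (⇑e.toFun : Fin (X.p + 1) → Fin (p + 1)) = ⇑e'.toFun := by
    funext x
    apply hm
    rw [hcc x, ← congrFun hmf (e'.toFun x)]
  have hT : Tw = Tw' := by
    have h1 := he.2
    have h2 := he'.2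
    simp only at h1 h2
    rw [h1, h2, hef]
  subst hT
  have hee : e = e' := NeckHom.ext (OrderHom.ext _ _ hef)
  have hmm' : m = m' := NeckHom.ext (OrderHom.ext _ _ hmf)
  exact ⟨rfl, heq_of_eq hee, heq_of_eq hmm'⟩

end NeckFactor

open NeckFactor in
/-- The index type for the coproduct: injective necklace maps into `T`. -/
abbrev NeckIdx (T : Neck) : Type :=
  Σ U : NeckM, {f : NeckHom U.obj T // Function.Injective f.toFun}

/-- The inclusion of the discrete category of injective maps into the comma category. -/
def neckIncl (T : Neck) : Discrete (NeckIdx T) ⥤ CostructuredArrow iota T :=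
  Discrete.functor fun i => CostructuredArrow.mk (Y := i.1) (i.2.1 : iota.obj i.1 ⟶ T)

open NeckFactor in
instance neckIncl_final (T : Neck) : (neckIncl T).Final := by
  constructor
  intro c
  -- existence of a factorization
  let f : NeckHom c.left.obj T := c.hom
  let i₀ : NeckIdx T := ⟨⟨mid f⟩, ⟨mHom f, mHom_inj f⟩⟩
  let u₀ : c ⟶ (neckIncl T).obj ⟨i₀⟩ :=
    CostructuredArrow.homMk (⟨eHom f, eHom_actSurj f⟩ : NeckMHom c.left ⟨mid f⟩)
      (by
        show (eHom f).comp' (mHom f) ≫ 𝟙 T = c.hom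
        rw [Category.comp_id]
        exact comp_eq f)
  haveI : Nonempty (CategoryTheory.StructuredArrow c (neckIncl T)) :=
    ⟨CategoryTheory.StructuredArrow.mk u₀⟩
  apply zigzag_isConnected
  have key : ∀ j₁ j₂ : CategoryTheory.StructuredArrow c (neckIncl T), j₁ = j₂ := by
    rintro ⟨⟨⟨⟩⟩, ⟨⟨⟨W₁⟩, m₁, inj₁⟩⟩, u₁⟩ ⟨⟨⟨⟩⟩, ⟨⟨⟨W₂⟩, m₂, inj₂⟩⟩, u₂⟩
    have w₁ := CostructuredArrow.w u₁
    have w₂ := CostructuredArrow.w u₂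
    have hc : (u₁.left.1).comp' m₁ = (u₂.left.1).comp' m₂ := by
      have h1 : (u₁.left.1).comp' m₁ = c.hom := w₁
      have h2 : (u₂.left.1).comp' m₂ = c.hom := w₂
      rw [h1, h2]
    obtain ⟨hW, hee, hmm⟩ := factor_unique u₁.left.1 m₁ u₂.left.1 m₂
      u₁.left.2 u₂.left.2 inj₁ inj₂ hc
    subst hW
    have hm : m₁ = m₂ := eq_of_heq hmm
    subst hm
    have hinj : inj₁ = inj₂ := Subsingleton.elim _ _
    subst hinj
    have hu : u₁ = u₂ := by
      apply CommaMorphism.ext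
      · exact Subtype.ext (eq_of_heq hee)
      · exact Subsingleton.elim _ _
    subst hu
    rfl
  intro j₁ j₂
  rw [key j₁ j₂]


/-- Pointwise formula for the left Kan extension along `ι : Nec₋ ↪ Nec`: for
any functor `D' : Nec₋ ⥤ V` into a cocomplete category and any necklace `T`,
`(Lan_ι D')(T) ≅ ⨿_{U ↪ T injective} D'(U)`, the coproduct running over the
injective necklace maps into `T`. -/
theorem lan_iota_eval_iso_coproduct
    {V : Type*} [Category V] [HasColimits V] [HasColimitsOfSize.{0, 0} V]
    (D' : NeckM ⥤ V) (E : Neck ⥤ V) (α : D' ⟶ iota ⋙ E)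
    [E.IsLeftKanExtension α] (T : Neck) :
    Nonempty
      (E.obj T ≅
        ∐ fun i : (Σ U : NeckM, {f : NeckHom U.obj T // Function.Injective f.toFun}) =>
          D'.obj i.1) := by
  have P := Functor.isPointwiseLeftKanExtensionOfIsLeftKanExtension (L := iota) E α
  have iso1 : E.obj T ≅ colimit (CostructuredArrow.proj iota T ⋙ D') :=
    (P T).coconePointUniqueUpToIso (colimit.isColimit _)
  have iso2 : colimit (neckIncl T ⋙ (CostructuredArrow.proj iota T ⋙ D'))
      ≅ colimit (CostructuredArrow.proj iota T ⋙ D') :=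
    Functor.Final.colimitIso (neckIncl T) _
  have iso3 : colimit (neckIncl T ⋙ (CostructuredArrow.proj iota T ⋙ D'))
      ≅ ∐ fun i : NeckIdx T => D'.obj i.1 :=
    HasColimit.isoOfNatIso (Discrete.natIso fun i => Iso.refl _)
  exact ⟨iso1 ≪≫ iso2.symm ≪≫ iso3⟩
end

section
/- The dimension functor dim: Nec₊ → □₊ from injective necklace maps to injective cube maps is a discrete fibration: for every necklace (T,p) and every injective map g: [1]^n → [1]^{dim(T)} in the category of cubes with connections, there exists a unique injective necklace map f: U ↪ T with dim(U) = n and dim(f) = g. -/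
def IsNeck (p : ℕ) (T : Finset ℕ) : Prop :=
  T ⊆ Finset.range (p + 1) ∧ 0 ∈ T ∧ p ∈ T

/-- The dimension of a necklace `(T,p)`: the cardinality of the complement
`[p] \ T`. -/
abbrev cdim (p : ℕ) (T : Finset ℕ) : ℕ := (Finset.range (p + 1) \ T).card

/-- An injective necklace map `g : (U,q) ↪ (T,p)` of dimension `n`, recorded by
its image data `V = g([q])`, `W = g(U)`. -/
structure Idx (p : ℕ) (T : Finset ℕ) (n : ℕ) : Type where
  V : Finset ℕ
  W : Finset ℕ
  hTW : T ⊆ W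
  hWV : W ⊆ V
  hV : V ⊆ Finset.range (p + 1)
  h0 : 0 ∈ W
  hp : p ∈ W
  hdim : (V \ W).card = n

/-- Morphisms of the category `□` of cubes with connections, as maps of
vertex sets `[1]^a → [1]^b`: the class generated by identities, the faces
`δ_i^ε`, the degeneracies `σ_i` and the connections `γ_i`, under composition. -/
inductive IsCubeMap : ∀ {a b : ℕ}, ((Fin a → Bool) → (Fin b → Bool)) → Prop
  | id (a : ℕ) : IsCubeMap (fun v : Fin a → Bool => v)
  | face {a : ℕ} (i : Fin (a + 1)) (ε : Bool) :
      IsCubeMap (fun v : Fin a → Bool => i.insertNth ε v)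
  | degen {a : ℕ} (i : Fin (a + 1)) :
      IsCubeMap (fun (v : Fin (a + 1) → Bool) (j : Fin a) => v (i.succAbove j))
  | conn {a : ℕ} (i : Fin (a + 1)) :
      IsCubeMap (fun (v : Fin (a + 2) → Bool) (j : Fin (a + 1)) =>
        if (j : ℕ) < (i : ℕ) then v (Fin.castSucc j)
        else if j = i then v (Fin.castSucc j) || v (Fin.succ j)
        else v (Fin.succ j))
  | comp {a b c : ℕ} {f : (Fin a → Bool) → (Fin b → Bool)}
      {g : (Fin b → Bool) → (Fin c → Bool)} :
      IsCubeMap f → IsCubeMap g → IsCubeMap (fun v => g (f v))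

theorem isCubeMap_normalForm {a b : ℕ} {F : (Fin a → Bool) → (Fin b → Bool)}
    (h : IsCubeMap F) :
    ∃ (cst : Fin b → Bool) (S : Fin b → Finset (Fin a)),
      (∀ v l, F v l = true ↔ cst l = true ∨ ∃ j ∈ S l, v j = true) ∧
      (∀ l₁ l₂ : Fin b, l₁ < l₂ → ∀ j₁ ∈ S l₁, ∀ j₂ ∈ S l₂, j₁ < j₂) := by
  induction h with
  | id a =>
      exact ⟨fun _ => false, fun l => {l}, by simp, by simp +contextual⟩
  | @face a i ε =>
      classical
      refine ⟨fun l => if l = i then ε else false,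
        fun l => Finset.univ.filter (fun j => i.succAbove j = l), ?_, ?_⟩
      · intro v l
        by_cases hl : l = i
        · subst hl
          simp [Fin.insertNth_apply_same, Fin.succAbove_ne]
        · obtain ⟨j, hj⟩ := Fin.exists_succAbove_eq hl
          subst hj
          simp only [Fin.insertNth_apply_succAbove, if_neg hl]
          constructor
          · intro hv; exact Or.inr ⟨j, by simp, hv⟩
          · rintro (h | ⟨j', hj', hv⟩)
            · simp at h
            · simp only [Finset.mem_filter] at hj'
              rwa [Fin.succAbove_right_injective hj'.2] at hv
      · intro l₁ l₂ hl j₁ hj₁ j₂ hj₂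
        simp only [Finset.mem_filter, Finset.mem_univ, true_and] at hj₁ hj₂
        exact (Fin.strictMono_succAbove i).lt_iff_lt.mp (by rw [hj₁, hj₂]; exact hl)
  | @degen a i =>
      refine ⟨fun _ => false, fun j => {i.succAbove j}, by simp, ?_⟩
      intro l₁ l₂ hl j₁ hj₁ j₂ hj₂
      simp only [Finset.mem_singleton] at hj₁ hj₂
      subst hj₁; subst hj₂
      exact (Fin.strictMono_succAbove i) hl
  | @conn a i =>
      classical
      refine ⟨fun _ => false,
        fun j => if (j : ℕ) < (i : ℕ) then {Fin.castSucc j}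
          else if j = i then {Fin.castSucc j, Fin.succ j} else {Fin.succ j}, ?_, ?_⟩
      · intro v l
        by_cases h1 : (l : ℕ) < (i : ℕ)
        · simp [h1]
        · by_cases h2 : l = i <;> simp [h1, h2]
      · intro l₁ l₂ hl j₁ hj₁ j₂ hj₂
        beta_reduce at hj₁ hj₂
        rw [Fin.lt_def] at hl ⊢
        have h1 : (l₁ : ℕ) ≤ (j₁ : ℕ) ∧ (j₁ : ℕ) ≤ (l₁ : ℕ) + 1 ∧
            ((j₁ : ℕ) = (l₁ : ℕ) + 1 → (i : ℕ) ≤ (l₁ : ℕ)) := by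
          split_ifs at hj₁ with h h'
          · simp only [Finset.mem_singleton] at hj₁
            subst hj₁
            simp only [Fin.coe_castSucc]
            omega
          · have hi : (l₁ : ℕ) = (i : ℕ) := by rw [h']
            simp only [Finset.mem_insert, Finset.mem_singleton] at hj₁
            rcases hj₁ with rfl | rfl <;>
              simp only [Fin.coe_castSucc, Fin.val_succ] <;> omega
          · simp only [Finset.mem_singleton] at hj₁
            subst hj₁
            simp only [Fin.val_succ]
            omega
        have h2 : (l₂ : ℕ) ≤ (j₂ : ℕ) ∧
            (¬ (l₂ : ℕ) < (i : ℕ) → (l₂ : ℕ) ≠ (i : ℕ) → (j₂ : ℕ) = (l₂ : ℕ) + 1) := by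
          split_ifs at hj₂ with h h'
          · simp only [Finset.mem_singleton] at hj₂
            subst hj₂
            simp only [Fin.coe_castSucc]
            omega
          · have hi : (l₂ : ℕ) = (i : ℕ) := by rw [h']
            simp only [Finset.mem_insert, Finset.mem_singleton] at hj₂
            rcases hj₂ with rfl | rfl <;>
              simp only [Fin.coe_castSucc, Fin.val_succ] <;> omega
          · have hi : ¬ (l₂ : ℕ) = (i : ℕ) := fun hh => h' (Fin.ext hh)
            simp only [Finset.mem_singleton] at hj₂
            subst hj₂
            simp only [Fin.val_succ]
            exact ⟨by omega, fun _ _ => trivial⟩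
        obtain ⟨a1, a2, a3⟩ := h1
        obtain ⟨b1, b2⟩ := h2
        by_cases hj : (j₁ : ℕ) = (l₁ : ℕ) + 1
        · have ha := a3 hj
          by_cases hc2 : (l₂ : ℕ) = (i : ℕ)
          · omega
          · have hb := b2 (by omega) hc2
            omega
        · omega
  | @comp a' b' c' f g hf hg ihf ihg =>
      classical
      obtain ⟨cf, Sf, ef, of⟩ := ihf
      obtain ⟨cg, Sg, eg, og⟩ := ihg
      refine ⟨fun l => cg l || decide (∃ k ∈ Sg l, cf k = true),
        fun l => (Sg l).biUnion Sf, ?_, ?_⟩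
      · intro v l
        simp only [eg, Bool.or_eq_true, decide_eq_true_eq, Finset.mem_biUnion]
        constructor
        · rintro (h | ⟨k, hk, hfk⟩)
          · exact Or.inl (Or.inl h)
          · rcases (ef v k).mp hfk with h | ⟨j, hj, hv⟩
            · exact Or.inl (Or.inr ⟨k, hk, h⟩)
            · exact Or.inr ⟨j, ⟨k, hk, hj⟩, hv⟩
        · rintro ((h | ⟨k, hk, h⟩) | ⟨j, ⟨k, hk, hj⟩, hv⟩)
          · exact Or.inl h
          · exact Or.inr ⟨k, hk, (ef v k).mpr (Or.inl h)⟩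
          · exact Or.inr ⟨k, hk, (ef v k).mpr (Or.inr ⟨j, hj, hv⟩)⟩
      · intro l₁ l₂ hl j₁ hj₁ j₂ hj₂
        simp only [Finset.mem_biUnion] at hj₁ hj₂
        obtain ⟨k₁, hk₁, hjk₁⟩ := hj₁
        obtain ⟨k₂, hk₂, hjk₂⟩ := hj₂
        exact of k₁ k₂ (og l₁ l₂ hl k₁ hk₁ k₂ hk₂) j₁ hjk₁ j₂ hjk₂

theorem Idx.ext2 {p : ℕ} {T : Finset ℕ} {n : ℕ} {x y : Idx p T n}
    (hV : x.V = y.V) (hW : x.W = y.W) : x = y := by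
  cases x; cases y
  cases hV; cases hW
  rfl


/-- `dim : Nec₊ → □₊` is a discrete fibration: for every necklace `(T,p)` and
every injective cube map `g : [1]^n → [1]^{dim T}` there is a unique injective
necklace map `f : U ↪ T` with `dim U = n` and `dim f = g`.  The condition
`dim f = g` is expressed coordinatewise: under the identifications
`P_U ≅ [1]^n` (via the enumeration of `V \ W`) and `P_T ≅ [1]^{dim T}` (via the
enumeration of `[p] \ T`), the map `V' ↦ f(V')` agrees with `g`. -/
theorem dim_discreteFibration_on_injective
    (p : ℕ) (T : Finset ℕ) (hT : IsNeck p T) (n : ℕ)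
    (G : (Fin n → Bool) → (Fin (cdim p T) → Bool))
    (hG : IsCubeMap G) (hinj : Function.Injective G) :
    ∃! x : Idx p T n, ∀ (A : Fin n → Bool) (l : Fin (cdim p T)),
      G A l = decide
        ((((Finset.range (p + 1) \ T).orderIsoOfFin rfl l : ℕ) ∈ x.W) ∨
          ∃ kk : Fin n, A kk = true ∧
            (((x.V \ x.W).orderIsoOfFin x.hdim kk : ℕ) =
              ((Finset.range (p + 1) \ T).orderIsoOfFin rfl l : ℕ))) := by
  classical
  set e := (Finset.range (p + 1) \ T).orderIsoOfFin (rfl : _ = cdim p T) with he_def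
  obtain ⟨cst, S, heval, hord⟩ := isCubeMap_normalForm hG
  -- basic facts about e
  have he_mem : ∀ l, ((e l : ℕ)) ∈ Finset.range (p + 1) \ T := fun l => (e l).2
  have he_inj : Function.Injective (fun l => ((e l : ℕ))) := by
    intro a b h
    exact e.injective (Subtype.ext h)
  -- every input coordinate appears as a singleton
  have hsingle : ∀ k : Fin n, ∃ l, cst l = false ∧ S l = {k} := by
    intro k
    by_contra hcon
    push_neg at hcon
    have hGv : G (fun _ => true) = G (fun j => decide (j ≠ k)) := by
      funext l
      rw [Bool.eq_iff_iff, heval, heval]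
      constructor
      · rintro (h | ⟨j, hj, -⟩)
        · exact Or.inl h
        · rcases Bool.eq_false_or_eq_true (cst l) with hc | hc
          · exact Or.inl hc
          · refine Or.inr ?_
            by_contra hall
            push_neg at hall
            refine hcon l hc ?_
            refine Finset.eq_singleton_iff_unique_mem.mpr ⟨?_, ?_⟩
            · have := hall j hj
              simp only [decide_eq_true_eq, ne_eq, not_not] at this
              rwa [← this]
            · intro x hx
              have := hall x hx
              simpa using this
      · rintro (h | ⟨j, hj, -⟩)
        · exact Or.inl h
        · exact Or.inr ⟨j, hj, rfl⟩
    have := congrFun (hinj hGv) k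
    simp at this
  choose φ hφc hφS using hsingle
  have hφmono : StrictMono φ := by
    intro k₁ k₂ hk
    rcases lt_trichotomy (φ k₁) (φ k₂) with h | h | h
    · exact h
    · exfalso
      have h2 : k₁ = k₂ := by
        have h1 := hφS k₁
        rw [h, hφS k₂] at h1
        simpa using h1.symm
      exact absurd h2 hk.ne
    · exfalso
      have h2 := hord (φ k₂) (φ k₁) h k₂ (by rw [hφS]; simp) k₁ (by rw [hφS]; simp)
      exact absurd (hk.trans h2) (lt_irrefl _)
  have hφinj : Function.Injective φ := hφmono.injective
  -- coverage: any l with nonempty S l is φ j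
  have hcover : ∀ l (j : Fin n), j ∈ S l → l = φ j := by
    intro l j hj
    rcases lt_trichotomy l (φ j) with h | h | h
    · exact absurd (hord l (φ j) h j hj j (by rw [hφS]; simp)) (lt_irrefl _)
    · exact h
    · exact absurd (hord (φ j) l h j (by rw [hφS]; simp) j hj) (lt_irrefl _)
  -- the candidate
  set Wx : Finset ℕ := T ∪ (Finset.univ.filter (fun l => cst l = true)).image
      (fun l => ((e l : ℕ))) with hWx_def
  set Vx : Finset ℕ := Wx ∪ Finset.univ.image (fun k => ((e (φ k) : ℕ))) with hVx_def
  have hTW : T ⊆ Wx := Finset.subset_union_left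
  have hWV : Wx ⊆ Vx := Finset.subset_union_left
  have hV : Vx ⊆ Finset.range (p + 1) := by
    intro z hz
    simp only [hVx_def, hWx_def, Finset.mem_union, Finset.mem_image, Finset.mem_filter] at hz
    rcases hz with (hz | ⟨l, _, rfl⟩) | ⟨k, _, rfl⟩
    · exact hT.1 hz
    · exact (Finset.mem_sdiff.mp (he_mem l)).1
    · exact (Finset.mem_sdiff.mp (he_mem (φ k))).1
  have hdisj : ∀ k : Fin n, ((e (φ k) : ℕ)) ∉ Wx := by
    intro k hk
    simp only [hWx_def, Finset.mem_union, Finset.mem_image, Finset.mem_filter,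
      Finset.mem_univ, true_and] at hk
    rcases hk with hk | ⟨l, hl, hel⟩
    · exact absurd hk (Finset.mem_sdiff.mp (he_mem (φ k))).2
    · have : l = φ k := he_inj hel
      rw [this, hφc k] at hl
      simp at hl
  have hVW : Vx \ Wx = Finset.univ.image (fun k => ((e (φ k) : ℕ))) := by
    ext z
    simp only [Finset.mem_sdiff, hVx_def, Finset.mem_union, Finset.mem_image,
      Finset.mem_univ, true_and]
    constructor
    · rintro ⟨hz | ⟨k, rfl⟩, hzW⟩
      · exact absurd hz hzW
      · exact ⟨k, rfl⟩
    · rintro ⟨k, rfl⟩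
      exact ⟨Or.inr ⟨k, rfl⟩, hdisj k⟩
  have hdim : (Vx \ Wx).card = n := by
    rw [hVW, Finset.card_image_of_injective _ (fun a b h => hφinj (he_inj h)),
      Finset.card_univ, Fintype.card_fin]
  -- identify the enumeration of Vx \ Wx
  have hemb : (fun k => ((e (φ k) : ℕ))) = (Vx \ Wx).orderEmbOfFin hdim := by
    refine Finset.orderEmbOfFin_unique hdim ?_ ?_
    · intro k
      rw [hVW]
      exact Finset.mem_image.mpr ⟨k, Finset.mem_univ k, rfl⟩
    · intro k₁ k₂ hk
      exact Subtype.coe_lt_coe.mpr (e.strictMono (hφmono hk))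
  have hiso : ∀ kk : Fin n, (((Vx \ Wx).orderIsoOfFin hdim kk : ℕ)) = ((e (φ kk) : ℕ)) := by
    intro kk
    rw [Finset.coe_orderIsoOfFin_apply, ← hemb]
  -- membership characterizations
  have hWx_iff : ∀ l, ((e l : ℕ)) ∈ Wx ↔ cst l = true := by
    intro l
    simp only [hWx_def, Finset.mem_union, Finset.mem_image, Finset.mem_filter,
      Finset.mem_univ, true_and]
    constructor
    · rintro (h | ⟨l', hl', hel⟩)
      · exact absurd h (Finset.mem_sdiff.mp (he_mem l)).2
      · rwa [he_inj hel] at hl'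
    · intro h
      exact Or.inr ⟨l, h, rfl⟩
  set x₀ : Idx p T n := ⟨Vx, Wx, hTW, hWV, hV, hTW hT.2.1, hTW hT.2.2, hdim⟩ with hx₀_def
  have hx : ∀ (A : Fin n → Bool) (l : Fin (cdim p T)),
      G A l = decide ((((e l : ℕ)) ∈ x₀.W) ∨ ∃ kk : Fin n, A kk = true ∧
        (((x₀.V \ x₀.W).orderIsoOfFin x₀.hdim kk : ℕ)) = ((e l : ℕ))) := by
    intro A l
    rw [Bool.eq_iff_iff, heval, decide_eq_true_eq]
    change _ ↔ ((e l : ℕ)) ∈ Wx ∨ ∃ kk : Fin n, A kk = true ∧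
      (((Vx \ Wx).orderIsoOfFin hdim kk : ℕ)) = ((e l : ℕ))
    simp only [hiso]
    rw [hWx_iff]
    constructor
    · rintro (h | ⟨j, hj, hA⟩)
      · exact Or.inl h
      · refine Or.inr ⟨j, hA, ?_⟩
        rw [hcover l j hj]
    · rintro (h | ⟨kk, hA, hekk⟩)
      · exact Or.inl h
      · refine Or.inr ⟨kk, ?_, hA⟩
        have : φ kk = l := he_inj hekk
        rw [← this, hφS]
        simp
  have hrep : ∀ z ∈ Finset.range (p + 1) \ T, ∃ l, ((e l : ℕ)) = z := by
    intro z hz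
    refine ⟨e.symm ⟨z, hz⟩, ?_⟩
    exact congrArg Subtype.val (e.apply_symm_apply ⟨z, hz⟩)
  have hkeyW : ∀ (z : Idx p T n),
      (∀ (A : Fin n → Bool) (l : Fin (cdim p T)),
        G A l = decide ((((e l : ℕ)) ∈ z.W) ∨ ∃ kk : Fin n, A kk = true ∧
          (((z.V \ z.W).orderIsoOfFin z.hdim kk : ℕ)) = ((e l : ℕ)))) →
      ∀ l, (((e l : ℕ)) ∈ z.W ↔ G (fun _ => false) l = true) := by
    intro z hz l
    have h1 := hz (fun _ => false) l
    simp only [Bool.false_eq_true, false_and, exists_false, or_false] at h1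
    rw [h1, decide_eq_true_eq]
  have hkeyV : ∀ (z : Idx p T n),
      (∀ (A : Fin n → Bool) (l : Fin (cdim p T)),
        G A l = decide ((((e l : ℕ)) ∈ z.W) ∨ ∃ kk : Fin n, A kk = true ∧
          (((z.V \ z.W).orderIsoOfFin z.hdim kk : ℕ)) = ((e l : ℕ)))) →
      ∀ l, (((e l : ℕ)) ∈ z.V ↔ G (fun _ => true) l = true) := by
    intro z hz l
    have h1 := hz (fun _ => true) l
    rw [h1, decide_eq_true_eq]
    constructor
    · intro hv
      by_cases hw : ((e l : ℕ)) ∈ z.W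
      · exact Or.inl hw
      · refine Or.inr ?_
        have hm : ((e l : ℕ)) ∈ z.V \ z.W := Finset.mem_sdiff.mpr ⟨hv, hw⟩
        refine ⟨((z.V \ z.W).orderIsoOfFin z.hdim).symm ⟨_, hm⟩, rfl, ?_⟩
        exact congrArg Subtype.val
          (((z.V \ z.W).orderIsoOfFin z.hdim).apply_symm_apply ⟨_, hm⟩)
    · rintro (hw | ⟨kk, -, hkk⟩)
      · exact z.hWV hw
      · rw [← hkk]
        exact (Finset.mem_sdiff.mp
          (Finset.coe_mem (((z.V \ z.W).orderIsoOfFin z.hdim) kk))).1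
  refine ⟨x₀, hx, ?_⟩
  intro y hy
  refine Idx.ext2 ?_ ?_
  · -- V equality
    ext z
    constructor
    · intro hz
      by_cases hzT : z ∈ T
      · exact x₀.hWV (x₀.hTW hzT)
      · obtain ⟨l, rfl⟩ := hrep z (Finset.mem_sdiff.mpr ⟨y.hV hz, hzT⟩)
        exact (hkeyV x₀ hx l).mpr ((hkeyV y hy l).mp hz)
    · intro hz
      by_cases hzT : z ∈ T
      · exact y.hWV (y.hTW hzT)
      · obtain ⟨l, rfl⟩ := hrep z (Finset.mem_sdiff.mpr ⟨x₀.hV hz, hzT⟩)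
        exact (hkeyV y hy l).mpr ((hkeyV x₀ hx l).mp hz)
  · -- W equality
    ext z
    constructor
    · intro hz
      by_cases hzT : z ∈ T
      · exact x₀.hTW hzT
      · obtain ⟨l, rfl⟩ := hrep z (Finset.mem_sdiff.mpr ⟨y.hV (y.hWV hz), hzT⟩)
        exact (hkeyW x₀ hx l).mpr ((hkeyW y hy l).mp hz)
    · intro hz
      by_cases hzT : z ∈ T
      · exact y.hTW hzT
      · obtain ⟨l, rfl⟩ := hrep z (Finset.mem_sdiff.mpr ⟨x₀.hV (x₀.hWV hz), hzT⟩)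
        exact (hkeyW y hy l).mpr ((hkeyW x₀ hx l).mp hz)
end

section
/- For any nonempty finite set of necklaces structure: given a map f: T₁ ∨ T₂ → U in the extended necklace category, there exist unique necklaces U₁, U₂ and maps f_i: T_i → U_i (i = 1,2) in the extended necklace category such that U₁ ∨ U₂ = U ∪ {p} (where p is the wedge point, i.e. the length of T₁'s image endpoint) and f = ν ∘ (f₁ ∨ f₂), where ν: U ∪ {p} → U is the inert map. Moreover, if f is a necklace map (i.e. lies in Nec), then so are f₁ and f₂. -/
/-- The wedge of necklaces `(T₁,k)` and `(T₂,l)`: joints `T₁ ∪ (k + T₂)`. -/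
def wedgeT (T₁ : Finset ℕ) (k : ℕ) (T₂ : Finset ℕ) : Finset ℕ :=
  T₁ ∪ T₂.image (· + k)

/-- The data of a splitting of a morphism `(f, U') : T₁ ∨ T₂ → U` of the
extended necklace category as `ν ∘ (f₁ ∨ f₂)` with `fᵢ = (fᵢ, Uᵢ') : Tᵢ → Uᵢ`,
where `U₁ ∨ U₂ = U ∪ {p}` (`p = f(k)` is the wedge point) and
`ν : U ∪ {p} → U` is the inert map. -/
structure WedgeSplit (k l n : ℕ) (T₁ T₂ U : Finset ℕ) (f : ℕ → ℕ) (U' : Finset ℕ)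
    (U₁ U₂ U₁' U₂' : Finset ℕ) (f₁ f₂ : ℕ → ℕ) : Prop where
  neck₁ : IsNeck (f k) U₁
  neck₂ : IsNeck (n - f k) U₂
  mono₁ : MonotoneOn f₁ (Set.Iic k)
  zero₁ : f₁ 0 = 0
  last₁ : f₁ k = f k
  mono₂ : MonotoneOn f₂ (Set.Iic l)
  zero₂ : f₂ 0 = 0
  last₂ : f₂ l = n - f k
  hom₁ : T₁.image f₁ ∪ U₁ ⊆ U₁'
  range₁ : U₁' ⊆ Finset.range (f k + 1)
  hom₂ : T₂.image f₂ ∪ U₂ ⊆ U₂'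
  range₂ : U₂' ⊆ Finset.range (n - f k + 1)
  wedge_eq : wedgeT U₁ (f k) U₂ = insert (f k) U
  agree₁ : ∀ i ≤ k, f i = f₁ i
  agree₂ : ∀ i ≤ l, f (k + i) = f k + f₂ i
  comp_eq : insert (f k) U ∪ (U₁' ∪ U₂'.image (· + f k)) = U'

/-- Any wedge split has the canonical components. -/
lemma wedgeSplit_canonical {k l n : ℕ} {T₁ T₂ U : Finset ℕ} {f : ℕ → ℕ} {U' : Finset ℕ}
    {U₁ U₂ U₁' U₂' : Finset ℕ} {f₁ f₂ : ℕ → ℕ}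
    (h : WedgeSplit k l n T₁ T₂ U f U' U₁ U₂ U₁' U₂' f₁ f₂) :
    U₁ = (insert (f k) U).filter (· ≤ f k) ∧
    U₂ = ((insert (f k) U).filter (f k ≤ ·)).image (· - f k) ∧
    U₁' = U'.filter (· ≤ f k) ∧
    U₂' = (U'.filter (f k ≤ ·)).image (· - f k) := by
  have hU₁le : ∀ x ∈ U₁, x ≤ f k := by
    intro x hx
    have := h.neck₁.1 hx
    simp only [Finset.mem_range] at this
    omega
  have hU₂le : ∀ x ∈ U₂, x ≤ n - f k := by
    intro x hx
    have := h.neck₂.1 hx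
    simp only [Finset.mem_range] at this
    omega
  have hfkU₁ : f k ∈ U₁ := h.neck₁.2.2
  have h0U₂ : (0:ℕ) ∈ U₂ := h.neck₂.2.1
  have hU₁sub : U₁ ⊆ U₁' := fun x hx => h.hom₁ (Finset.mem_union_right _ hx)
  have hU₂sub : U₂ ⊆ U₂' := fun x hx => h.hom₂ (Finset.mem_union_right _ hx)
  have hU₁'le : ∀ x ∈ U₁', x ≤ f k := by
    intro x hx
    have := h.range₁ hx
    simp only [Finset.mem_range] at this
    omega
  -- membership in insert (f k) U via wedge_eq
  have hmem : ∀ x, x ∈ insert (f k) U ↔ x ∈ U₁ ∨ ∃ y ∈ U₂, y + f k = x := by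
    intro x
    rw [← h.wedge_eq]
    simp [wedgeT]
  -- membership in U' via comp_eq
  have hmem' : ∀ x, x ∈ U' ↔ x ∈ insert (f k) U ∨ x ∈ U₁' ∨ ∃ y ∈ U₂', y + f k = x := by
    intro x
    rw [← h.comp_eq]
    simp [or_assoc]
  have hU₁eq : U₁ = (insert (f k) U).filter (· ≤ f k) := by
    ext x
    simp only [Finset.mem_filter]
    constructor
    · intro hx
      exact ⟨(hmem x).mpr (Or.inl hx), hU₁le x hx⟩
    · rintro ⟨hx, hle⟩
      rcases (hmem x).mp hx with hx' | ⟨y, hy, hyx⟩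
      · exact hx'
      · have : x = f k := by omega
        rw [this]; exact hfkU₁
  have hU₂eq : U₂ = ((insert (f k) U).filter (f k ≤ ·)).image (· - f k) := by
    ext x
    simp only [Finset.mem_image, Finset.mem_filter]
    constructor
    · intro hx
      exact ⟨x + f k, ⟨(hmem _).mpr (Or.inr ⟨x, hx, rfl⟩), by omega⟩, by omega⟩
    · rintro ⟨y, ⟨hy, hle⟩, rfl⟩
      rcases (hmem y).mp hy with hy' | ⟨z, hz, hzy⟩
      · have : y = f k := le_antisymm (hU₁le y hy') hle
        simp [this, h0U₂]
      · have : y - f k = z := by omega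
        rw [this]; exact hz
  refine ⟨hU₁eq, hU₂eq, ?_, ?_⟩
  · ext x
    simp only [Finset.mem_filter]
    constructor
    · intro hx
      exact ⟨(hmem' x).mpr (Or.inr (Or.inl hx)), hU₁'le x hx⟩
    · rintro ⟨hx, hle⟩
      rcases (hmem' x).mp hx with hx' | hx' | ⟨y, hy, hyx⟩
      · apply hU₁sub
        rw [hU₁eq]
        exact Finset.mem_filter.mpr ⟨hx', hle⟩
      · exact hx'
      · have hy' := h.range₂ hy
        simp only [Finset.mem_range] at hy'
        have : x = f k := by omega
        rw [this]; exact hU₁sub hfkU₁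
  · ext x
    simp only [Finset.mem_image, Finset.mem_filter]
    constructor
    · intro hx
      exact ⟨x + f k, ⟨(hmem' _).mpr (Or.inr (Or.inr ⟨x, hx, rfl⟩)), by omega⟩, by omega⟩
    · rintro ⟨y, ⟨hy, hle⟩, rfl⟩
      rcases (hmem' y).mp hy with hy' | hy' | ⟨z, hz, hzy⟩
      · apply hU₂sub
        rw [hU₂eq]
        exact Finset.mem_image.mpr ⟨y, Finset.mem_filter.mpr ⟨hy', hle⟩, rfl⟩
      · have : y = f k := le_antisymm (hU₁'le y hy') hle
        rw [this]
        simpa using hU₂sub h0U₂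
      · have : y - f k = z := by omega
        rw [this]; exact hz

/-- Splitting lemma for morphisms out of a wedge in the extended necklace
category: given `(f,U') : T₁ ∨ T₂ → U` in `overline{Nec}`, there exist unique
necklaces `U₁, U₂` and morphisms `fᵢ : Tᵢ → Uᵢ` in `overline{Nec}` with
`U₁ ∨ U₂ = U ∪ {p}` (where `p = f(k)` is the wedge point) and
`f = ν ∘ (f₁ ∨ f₂)` for the inert map `ν : U ∪ {p} → U`; moreover if `f` is a
necklace map (`U' = f(T₁ ∨ T₂)`) then so are `f₁` and `f₂`. -/
theorem extNecklace_wedge_split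
    (k l n : ℕ) (T₁ T₂ U : Finset ℕ)
    (hT₁ : IsNeck k T₁) (hT₂ : IsNeck l T₂) (hU : IsNeck n U)
    (f : ℕ → ℕ) (U' : Finset ℕ)
    (hmono : MonotoneOn f (Set.Iic (k + l))) (hf0 : f 0 = 0) (hfkl : f (k + l) = n)
    (hcomp : (wedgeT T₁ k T₂).image f ∪ U ⊆ U') (hrange : U' ⊆ Finset.range (n + 1)) :
    (∃ (U₁ U₂ U₁' U₂' : Finset ℕ) (f₁ f₂ : ℕ → ℕ),
        WedgeSplit k l n T₁ T₂ U f U' U₁ U₂ U₁' U₂' f₁ f₂ ∧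
        (U' = (wedgeT T₁ k T₂).image f → U₁' = T₁.image f₁ ∧ U₂' = T₂.image f₂)) ∧
    (∀ (U₁ U₂ U₁' U₂' : Finset ℕ) (f₁ f₂ : ℕ → ℕ)
       (V₁ V₂ V₁' V₂' : Finset ℕ) (g₁ g₂ : ℕ → ℕ),
       WedgeSplit k l n T₁ T₂ U f U' U₁ U₂ U₁' U₂' f₁ f₂ →
       WedgeSplit k l n T₁ T₂ U f U' V₁ V₂ V₁' V₂' g₁ g₂ →
       U₁ = V₁ ∧ U₂ = V₂ ∧ U₁' = V₁' ∧ U₂' = V₂' ∧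
       (∀ i ≤ k, f₁ i = g₁ i) ∧ (∀ i ≤ l, f₂ i = g₂ i)) := by
  obtain ⟨hT₁r, hT₁0, hT₁k⟩ := hT₁
  obtain ⟨hT₂r, hT₂0, hT₂l⟩ := hT₂
  obtain ⟨hUr, hU0, hUn⟩ := hU
  have hT₁le : ∀ t ∈ T₁, t ≤ k := by
    intro t ht; have := hT₁r ht; simp only [Finset.mem_range] at this; omega
  have hT₂le : ∀ t ∈ T₂, t ≤ l := by
    intro t ht; have := hT₂r ht; simp only [Finset.mem_range] at this; omega
  have hUle : ∀ x ∈ U, x ≤ n := by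
    intro x hx; have := hUr hx; simp only [Finset.mem_range] at this; omega
  have hU'le : ∀ x ∈ U', x ≤ n := by
    intro x hx; have := hrange hx; simp only [Finset.mem_range] at this; omega
  have hf_le : ∀ a b, a ≤ b → b ≤ k + l → f a ≤ f b := fun a b hab hb =>
    hmono (Set.mem_Iic.mpr (hab.trans hb)) (Set.mem_Iic.mpr hb) hab
  have hfk_le_n : f k ≤ n := by
    have := hf_le k (k + l) (Nat.le_add_right k l) le_rfl; omega
  have hT₁U' : ∀ t ∈ T₁, f t ∈ U' := by
    intro t ht
    exact hcomp (Finset.mem_union_left _ (Finset.mem_image_of_mem f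
      (Finset.mem_union_left _ ht)))
  have hT₂U' : ∀ t ∈ T₂, f (k + t) ∈ U' := by
    intro t ht
    apply hcomp (Finset.mem_union_left _ (Finset.mem_image_of_mem f _))
    exact Finset.mem_union_right _ (Finset.mem_image.mpr ⟨t, ht, by omega⟩)
  have hUU' : U ⊆ U' := fun x hx => hcomp (Finset.mem_union_right _ hx)
  have hfkU' : f k ∈ U' := hT₁U' k hT₁k
  have hT₁fle : ∀ t ∈ T₁, f t ≤ f k := fun t ht =>
    hf_le t k (hT₁le t ht) (Nat.le_add_right k l)
  have hT₂fle : ∀ t ∈ T₂, f k ≤ f (k + t) ∧ f (k + t) ≤ n := by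
    intro t ht
    have h1 := hf_le k (k + t) (Nat.le_add_right k t) (by have := hT₂le t ht; omega)
    have h2 := hf_le (k + t) (k + l) (by have := hT₂le t ht; omega) le_rfl
    omega
  -- canonical data
  set U₁ : Finset ℕ := (insert (f k) U).filter (· ≤ f k) with hU₁def
  set U₂ : Finset ℕ := ((insert (f k) U).filter (f k ≤ ·)).image (· - f k) with hU₂def
  set U₁' : Finset ℕ := U'.filter (· ≤ f k) with hU₁'def
  set U₂' : Finset ℕ := (U'.filter (f k ≤ ·)).image (· - f k) with hU₂'def
  set f₂ : ℕ → ℕ := fun i => f (k + i) - f k with hf₂def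
  have hsplit : WedgeSplit k l n T₁ T₂ U f U' U₁ U₂ U₁' U₂' f f₂ := by
    constructor
    · -- neck₁
      refine ⟨?_, ?_, ?_⟩
      · intro x hx
        simp only [hU₁def, Finset.mem_filter] at hx
        simp only [Finset.mem_range]; omega
      · simp only [hU₁def, Finset.mem_filter]
        exact ⟨Finset.mem_insert_of_mem hU0, Nat.zero_le _⟩
      · simp [hU₁def]
    · -- neck₂
      refine ⟨?_, ?_, ?_⟩
      · intro x hx
        simp only [hU₂def, Finset.mem_image, Finset.mem_filter, Finset.mem_insert] at hx
        obtain ⟨y, ⟨hy, hle⟩, rfl⟩ := hx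
        have : y ≤ n := by rcases hy with rfl | hy; exacts [hfk_le_n, hUle y hy]
        simp only [Finset.mem_range]; omega
      · simp only [hU₂def, Finset.mem_image, Finset.mem_filter]
        exact ⟨f k, ⟨Finset.mem_insert_self _ _, le_rfl⟩, by omega⟩
      · simp only [hU₂def, Finset.mem_image, Finset.mem_filter]
        exact ⟨n, ⟨Finset.mem_insert_of_mem hUn, hfk_le_n⟩, rfl⟩
    · exact hmono.mono (Set.Iic_subset_Iic.mpr (Nat.le_add_right k l))
    · exact hf0
    · rfl
    · -- mono₂
      intro a ha b hb hab
      simp only [hf₂def]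
      have := hf_le (k + a) (k + b) (by omega) (by simp only [Set.mem_Iic] at hb; omega)
      omega
    · simp [hf₂def]
    · simp [hf₂def, hfkl]
    · -- hom₁
      apply Finset.union_subset
      · intro x hx
        obtain ⟨t, ht, rfl⟩ := Finset.mem_image.mp hx
        simp only [hU₁'def, Finset.mem_filter]
        exact ⟨hT₁U' t ht, hT₁fle t ht⟩
      · intro x hx
        simp only [hU₁def, Finset.mem_filter, Finset.mem_insert] at hx
        simp only [hU₁'def, Finset.mem_filter]
        refine ⟨?_, hx.2⟩
        rcases hx.1 with rfl | hx1
        · exact hfkU'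
        · exact hUU' hx1
    · -- range₁
      intro x hx
      simp only [hU₁'def, Finset.mem_filter] at hx
      simp only [Finset.mem_range]; omega
    · -- hom₂
      apply Finset.union_subset
      · intro x hx
        obtain ⟨t, ht, rfl⟩ := Finset.mem_image.mp hx
        simp only [hU₂'def, Finset.mem_image, Finset.mem_filter, hf₂def]
        exact ⟨f (k + t), ⟨hT₂U' t ht, (hT₂fle t ht).1⟩, rfl⟩
      · intro x hx
        simp only [hU₂def, Finset.mem_image, Finset.mem_filter, Finset.mem_insert] at hx
        obtain ⟨y, ⟨hy, hle⟩, rfl⟩ := hx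
        simp only [hU₂'def, Finset.mem_image, Finset.mem_filter]
        refine ⟨y, ⟨?_, hle⟩, rfl⟩
        rcases hy with rfl | hy
        · exact hfkU'
        · exact hUU' hy
    · -- range₂
      intro x hx
      simp only [hU₂'def, Finset.mem_image, Finset.mem_filter] at hx
      obtain ⟨y, ⟨hy, hle⟩, rfl⟩ := hx
      have := hU'le y hy
      simp only [Finset.mem_range]; omega
    · -- wedge_eq
      ext x
      simp only [wedgeT, Finset.mem_union, hU₁def, hU₂def, Finset.mem_image,
        Finset.mem_filter]
      constructor
      · rintro (⟨hx, _⟩ | ⟨_, ⟨y, ⟨hy, hley⟩, rfl⟩, rfl⟩)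
        · exact hx
        · have : y - f k + f k = y := by omega
          rwa [this]
      · intro hx
        rcases le_total x (f k) with hle | hle
        · exact Or.inl ⟨hx, hle⟩
        · exact Or.inr ⟨x - f k, ⟨x, ⟨hx, hle⟩, rfl⟩, by omega⟩
    · intro i _; rfl
    · intro i hi
      simp only [hf₂def]
      have := hf_le k (k + i) (Nat.le_add_right k i) (by omega)
      omega
    · -- comp_eq
      ext x
      simp only [Finset.mem_union, Finset.mem_insert, hU₁'def, hU₂'def,
        Finset.mem_image, Finset.mem_filter]
      constructor
      · rintro ((rfl | hx) | ⟨hx, _⟩ | ⟨_, ⟨y, ⟨hy, hley⟩, rfl⟩, rfl⟩)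
        · exact hfkU'
        · exact hUU' hx
        · exact hx
        · have : y - f k + f k = y := by omega
          rwa [this]
      · intro hx
        rcases le_total x (f k) with hle | hle
        · exact Or.inr (Or.inl ⟨hx, hle⟩)
        · exact Or.inr (Or.inr ⟨x - f k, ⟨x, ⟨hx, hle⟩, rfl⟩, by omega⟩)
  constructor
  · refine ⟨U₁, U₂, U₁', U₂', f, f₂, hsplit, ?_⟩
    intro hU'
    constructor
    · -- U₁' = T₁.image f
      ext x
      simp only [hU₁'def, Finset.mem_filter, hU', wedgeT, Finset.image_union,
        Finset.mem_union, Finset.mem_image]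
      constructor
      · rintro ⟨⟨t, ht, rfl⟩ | ⟨x, ⟨t, ht, rfl⟩, rfl⟩, hle⟩
        · exact ⟨t, ht, rfl⟩
        · have := (hT₂fle t ht).1
          have hkt : t + k = k + t := by omega
          rw [hkt] at hle ⊢
          have : f (k + t) = f k := by omega
          exact ⟨k, hT₁k, this.symm⟩
      · rintro ⟨t, ht, rfl⟩
        exact ⟨Or.inl ⟨t, ht, rfl⟩, hT₁fle t ht⟩
    · -- U₂' = T₂.image f₂
      ext x
      simp only [hU₂'def, Finset.mem_image, Finset.mem_filter, hU', wedgeT,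
        Finset.image_union, Finset.mem_union, Finset.mem_image, hf₂def]
      constructor
      · rintro ⟨y, ⟨⟨t, ht, rfl⟩ | ⟨y, ⟨t, ht, rfl⟩, rfl⟩, hle⟩, rfl⟩
        · have := hT₁fle t ht
          have : f t - f k = 0 := by omega
          rw [this]
          exact ⟨0, hT₂0, by simp [hf0]⟩
        · have hkt : t + k = k + t := by omega
          rw [hkt]
          exact ⟨t, ht, rfl⟩
      · rintro ⟨t, ht, rfl⟩
        exact ⟨f (k + t), ⟨Or.inr ⟨t + k, ⟨t, ht, rfl⟩, by rw [Nat.add_comm]⟩,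
          (hT₂fle t ht).1⟩, rfl⟩
  · -- uniqueness
    intro W₁ W₂ W₁' W₂' p₁ p₂ V₁ V₂ V₁' V₂' g₁ g₂ h h'
    obtain ⟨e1, e2, e3, e4⟩ := wedgeSplit_canonical h
    obtain ⟨e1', e2', e3', e4'⟩ := wedgeSplit_canonical h'
    refine ⟨e1.trans e1'.symm, e2.trans e2'.symm, e3.trans e3'.symm, e4.trans e4'.symm,
      ?_, ?_⟩
    · intro i hi
      rw [← h.agree₁ i hi, ← h'.agree₁ i hi]
    · intro i hi
      have a := h.agree₂ i hi
      have b := h'.agree₂ i hi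
      omega
end

section
/- The subcategories (overline{Nec}₋, overline{Nec}₊) form an orthogonal factorization system on the extended necklace category: every morphism (f,U'): (T,p) → (U,q) with f(T) ⊆ U' and U ⊆ U' factors uniquely as a morphism in overline{Nec}₋ followed by an injective necklace map. -/
/-- The data of a factorization of an extended necklace morphism
`(f,U') : (T,p) → (U,q)` as a morphism `(g,V) : (T,p) → (V,r)` of
`overline{Nec}₋` (component `V`, and `V ∪ g([p]) = [r]`) followed by an
injective necklace map `(h, h(V)) : (V,r) → (U,q)` with component `h(V) = U'`. -/
structure ExtNecFact (p q : ℕ) (T U U' : Finset ℕ) (f : ℕ → ℕ)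
    (r : ℕ) (V : Finset ℕ) (g h : ℕ → ℕ) : Prop where
  neckV : IsNeck r V
  monog : MonotoneOn g (Set.Iic p)
  g0 : g 0 = 0
  gp : g p = r
  gT : ∀ t ∈ T, g t ∈ V
  cover : V ∪ (Finset.range (p + 1)).image g = Finset.range (r + 1)
  stricth : StrictMonoOn h (Set.Iic r)
  h0 : h 0 = 0
  hr : h r = q
  hneck : U ⊆ V.image h
  hcomponent : V.image h = U'
  compeq : ∀ i ≤ p, h (g i) = f i

/-- Key auxiliary lemma: for any factorization, the image of `h` over `[r]`
is `U' ∪ f([p])`. -/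
theorem ExtNecFact.image_h {p q : ℕ} {T U U' : Finset ℕ} {f : ℕ → ℕ}
    {r : ℕ} {V : Finset ℕ} {g h : ℕ → ℕ}
    (F : ExtNecFact p q T U U' f r V g h) :
    (Finset.range (r + 1)).image h = U' ∪ (Finset.range (p + 1)).image f := by
  rw [← F.cover, Finset.image_union, F.hcomponent, Finset.image_image]
  congr 1
  apply Finset.image_congr
  intro j hj
  simp only [Finset.coe_range, Set.mem_Iio, Nat.lt_succ_iff] at hj
  exact F.compeq j hj

theorem ExtNecFact.g_le {p q : ℕ} {T U U' : Finset ℕ} {f : ℕ → ℕ}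
    {r : ℕ} {V : Finset ℕ} {g h : ℕ → ℕ}
    (F : ExtNecFact p q T U U' f r V g h) {i : ℕ} (hi : i ≤ p) : g i ≤ r := by
  have := F.monog (Set.mem_Iic.2 hi) (Set.mem_Iic.2 le_rfl) hi
  rwa [F.gp] at this

theorem ExtNecFact.card_eq {p q : ℕ} {T U U' : Finset ℕ} {f : ℕ → ℕ}
    {r : ℕ} {V : Finset ℕ} {g h : ℕ → ℕ}
    (F : ExtNecFact p q T U U' f r V g h) :
    (U' ∪ (Finset.range (p + 1)).image f).card = r + 1 := by
  rw [← F.image_h]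
  rw [Finset.card_image_of_injOn, Finset.card_range]
  apply F.stricth.injOn.mono
  intro x hx
  simp only [Finset.coe_range, Set.mem_Iio, Nat.lt_succ_iff] at hx
  exact hx

/-- `(overline{Nec}₋, overline{Nec}₊)` is an orthogonal factorization system on
the extended necklace category: every morphism `(f,U') : (T,p) → (U,q)` (with
`f(T) ⊆ U'` and `U ⊆ U'`) factors uniquely as a morphism of `overline{Nec}₋`
followed by an injective necklace map. -/
theorem extNecklace_minus_plus_factorization
    (p q : ℕ) (T U U' : Finset ℕ)
    (hT : IsNeck p T) (hU : IsNeck q U)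
    (f : ℕ → ℕ) (hmono : MonotoneOn f (Set.Iic p)) (hf0 : f 0 = 0) (hfp : f p = q)
    (hrange : U' ⊆ Finset.range (q + 1)) (hTf : ∀ t ∈ T, f t ∈ U') (hUU' : U ⊆ U') :
    (∃ (r : ℕ) (V : Finset ℕ) (g h : ℕ → ℕ), ExtNecFact p q T U U' f r V g h) ∧
    (∀ (r₁ : ℕ) (V₁ : Finset ℕ) (g₁ h₁ : ℕ → ℕ)
       (r₂ : ℕ) (V₂ : Finset ℕ) (g₂ h₂ : ℕ → ℕ),
       ExtNecFact p q T U U' f r₁ V₁ g₁ h₁ →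
       ExtNecFact p q T U U' f r₂ V₂ g₂ h₂ →
       r₁ = r₂ ∧ V₁ = V₂ ∧ (∀ i ≤ p, g₁ i = g₂ i) ∧ (∀ i ≤ r₁, h₁ i = h₂ i)) := by
  classical
  -- the combined set
  set W : Finset ℕ := U' ∪ (Finset.range (p + 1)).image f with hW
  set P : ℕ → Prop := fun x => x ∈ W with hP
  have hfin : (Set.ofPred P).Finite := W.finite_toSet
  have htofin : hfin.toFinset = W := by
    ext x; simp [hP]
  have h0U' : (0 : ℕ) ∈ U' := hUU' hU.2.1
  have hqU' : q ∈ U' := hUU' hU.2.2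
  have h0W : P 0 := Finset.mem_union_left _ h0U'
  have hqW : P q := Finset.mem_union_left _ hqU'
  have hWle : ∀ x, P x → x ≤ q := by
    intro x hx
    rcases Finset.mem_union.1 hx with hx | hx
    · exact Nat.lt_succ_iff.1 (Finset.mem_range.1 (hrange hx))
    · rcases Finset.mem_image.1 hx with ⟨j, hj, rfl⟩
      rw [Finset.mem_range, Nat.lt_succ_iff] at hj
      calc f j ≤ f p := hmono (Set.mem_Iic.2 hj) (Set.mem_Iic.2 le_rfl) hj
      _ = q := hfp
  have hWne : W.Nonempty := ⟨0, h0W⟩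
  set r : ℕ := W.card - 1 with hrdef
  have hcard : hfin.toFinset.card = r + 1 := by
    rw [htofin, hrdef, Nat.sub_add_cancel (Finset.card_pos.2 hWne)]
  -- count of members is < card
  have hcount_lt : ∀ x, P x → Nat.count P x < r + 1 := by
    intro x hx
    rw [← hcard]
    exact Nat.count_lt_card hfin hx
  have hnth_count : ∀ x, P x → Nat.nth P (Nat.count P x) = x := fun x hx => Nat.nth_count hx
  have hnth_mem : ∀ i, i ≤ r → P (Nat.nth P i) := by
    intro i hi
    exact Nat.nth_mem_of_lt_card hfin (by omega)
  have hcount_nth : ∀ i, i ≤ r → Nat.count P (Nat.nth P i) = i := by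
    intro i hi
    exact Nat.count_nth_of_lt_card_finite hfin (by omega)
  have hnth0 : Nat.nth P 0 = 0 := by
    have := hnth_count 0 h0W
    rwa [Nat.count_zero] at this
  have hnthr : Nat.nth P r = q := by
    have h1 : Nat.nth P r ≤ q := hWle _ (hnth_mem r le_rfl)
    have h2 : q ≤ Nat.nth P r := by
      have hle : Nat.count P q ≤ r := by
        have := hcount_lt q hqW; omega
      calc q = Nat.nth P (Nat.count P q) := (hnth_count q hqW).symm
      _ ≤ Nat.nth P r := Nat.nth_le_nth_of_lt_card hfin hle (by omega)
    omega
  have hcountq : Nat.count P q = r := by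
    have h1 : Nat.count P q < r + 1 := hcount_lt q hqW
    apply Nat.nth_injOn hfin (by rw [hcard]; exact Set.mem_Iio.2 h1)
      (by rw [hcard]; exact Set.mem_Iio.2 (Nat.lt_succ_self r))
    rw [hnth_count q hqW, hnthr]
  have stricth : StrictMonoOn (Nat.nth P) (Set.Iic r) := by
    apply (Nat.nth_strictMonoOn hfin).mono
    intro x hx
    rw [hcard]
    exact Set.mem_Iio.2 (Nat.lt_succ_iff.2 (Set.mem_Iic.1 hx))
  have hfiW : ∀ i ≤ p, P (f i) :=
    fun i hi => Finset.mem_union_right _ (Finset.mem_image.2 ⟨i, Finset.mem_range.2 (by omega), rfl⟩)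
  refine ⟨⟨r, U'.image (Nat.count P), fun i => Nat.count P (f i), Nat.nth P, ?_⟩, ?_⟩
  · constructor
    · -- neckV
      refine ⟨?_, ?_, ?_⟩
      · intro x hx
        rcases Finset.mem_image.1 hx with ⟨y, hy, rfl⟩
        exact Finset.mem_range.2 (hcount_lt y (Finset.mem_union_left _ hy))
      · exact Finset.mem_image.2 ⟨0, h0U', Nat.count_zero P⟩
      · exact Finset.mem_image.2 ⟨q, hqU', hcountq⟩
    · -- monog
      intro a ha b hb hab
      exact Nat.count_monotone P (hmono ha hb hab)
    · rw [hf0, Nat.count_zero]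
    · rw [hfp, hcountq]
    · intro t ht
      exact Finset.mem_image.2 ⟨f t, hTf t ht, rfl⟩
    · -- cover
      apply Finset.Subset.antisymm
      · intro i hi
        rcases Finset.mem_union.1 hi with hi | hi
        · rcases Finset.mem_image.1 hi with ⟨y, hy, rfl⟩
          exact Finset.mem_range.2 (hcount_lt y (Finset.mem_union_left _ hy))
        · rcases Finset.mem_image.1 hi with ⟨j, hj, rfl⟩
          rw [Finset.mem_range, Nat.lt_succ_iff] at hj
          exact Finset.mem_range.2 (hcount_lt _ (hfiW j hj))
      · intro i hi
        rw [Finset.mem_range, Nat.lt_succ_iff] at hi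
        have hmem := hnth_mem i hi
        rcases Finset.mem_union.1 hmem with hx | hx
        · apply Finset.mem_union_left
          exact Finset.mem_image.2 ⟨Nat.nth P i, hx, hcount_nth i hi⟩
        · rcases Finset.mem_image.1 hx with ⟨j, hj, hji⟩
          apply Finset.mem_union_right
          refine Finset.mem_image.2 ⟨j, hj, ?_⟩
          rw [hji, hcount_nth i hi]
    · exact stricth
    · exact hnth0
    · exact hnthr
    · -- hneck
      intro u hu
      rw [Finset.image_image]
      refine Finset.mem_image.2 ⟨u, hUU' hu, hnth_count u (Finset.mem_union_left _ (hUU' hu))⟩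
    · -- hcomponent
      rw [Finset.image_image]
      apply Finset.Subset.antisymm
      · intro x hx
        rcases Finset.mem_image.1 hx with ⟨y, hy, rfl⟩
        simpa [hnth_count y (Finset.mem_union_left _ hy)] using hy
      · intro x hx
        exact Finset.mem_image.2 ⟨x, hx, hnth_count x (Finset.mem_union_left _ hx)⟩
    · -- compeq
      intro i hi
      exact hnth_count (f i) (hfiW i hi)
  · -- uniqueness
    intro r₁ V₁ g₁ h₁ r₂ V₂ g₂ h₂ F₁ F₂
    have hr12 : r₁ = r₂ := by
      have := F₁.card_eq
      have := F₂.card_eq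
      omega
    subst hr12
    have hc1 : W.card = r₁ + 1 := F₁.card_eq
    have hmemW₁ : ∀ i ≤ r₁, h₁ i ∈ W := by
      intro i hi
      rw [hW, ← F₁.image_h]
      exact Finset.mem_image.2 ⟨i, Finset.mem_range.2 (by omega), rfl⟩
    have hmemW₂ : ∀ i ≤ r₁, h₂ i ∈ W := by
      intro i hi
      rw [hW, ← F₂.image_h]
      exact Finset.mem_image.2 ⟨i, Finset.mem_range.2 (by omega), rfl⟩
    have heq : ∀ i ≤ r₁, h₁ i = h₂ i := by
      have e₁ : (fun j : Fin (r₁ + 1) => h₁ j) = W.orderEmbOfFin hc1 := by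
        apply Finset.orderEmbOfFin_unique hc1
        · exact fun x => hmemW₁ x (Nat.lt_succ_iff.1 x.2)
        · intro a b hab
          exact F₁.stricth (Set.mem_Iic.2 (Nat.lt_succ_iff.1 a.2))
            (Set.mem_Iic.2 (Nat.lt_succ_iff.1 b.2)) hab
      have e₂ : (fun j : Fin (r₁ + 1) => h₂ j) = W.orderEmbOfFin hc1 := by
        apply Finset.orderEmbOfFin_unique hc1
        · exact fun x => hmemW₂ x (Nat.lt_succ_iff.1 x.2)
        · intro a b hab
          exact F₂.stricth (Set.mem_Iic.2 (Nat.lt_succ_iff.1 a.2))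
            (Set.mem_Iic.2 (Nat.lt_succ_iff.1 b.2)) hab
      intro i hi
      have := congrFun (e₁.trans e₂.symm) ⟨i, by omega⟩
      simpa using this
    have hgeq : ∀ i ≤ p, g₁ i = g₂ i := by
      intro i hi
      have hle₁ : g₁ i ≤ r₁ := F₁.g_le hi
      have hle₂ : g₂ i ≤ r₁ := F₂.g_le hi
      apply F₁.stricth.injOn (Set.mem_Iic.2 hle₁) (Set.mem_Iic.2 hle₂)
      rw [F₁.compeq i hi, heq _ hle₂, F₂.compeq i hi]
    refine ⟨rfl, ?_, hgeq, heq⟩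
    have hVsub : ∀ (V V' : Finset ℕ) (h h' : ℕ → ℕ),
        V ⊆ Finset.range (r₁ + 1) → V' ⊆ Finset.range (r₁ + 1) →
        V.image h = V'.image h' → (∀ i ≤ r₁, h i = h' i) →
        StrictMonoOn h (Set.Iic r₁) → V ⊆ V' := by
      intro V V' h h' hV hV' himg hhh hsm x hx
      have hxr : x ≤ r₁ := Nat.lt_succ_iff.1 (Finset.mem_range.1 (hV hx))
      have : h x ∈ V'.image h' := himg ▸ Finset.mem_image.2 ⟨x, hx, rfl⟩
      rcases Finset.mem_image.1 this with ⟨y, hy, hyx⟩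
      have hyr : y ≤ r₁ := Nat.lt_succ_iff.1 (Finset.mem_range.1 (hV' hy))
      have : h y = h x := by rw [hhh y hyr]; exact hyx
      have := hsm.injOn (Set.mem_Iic.2 hyr) (Set.mem_Iic.2 hxr) this
      rwa [← this]
    apply Finset.Subset.antisymm
    · exact hVsub V₁ V₂ h₁ h₂ F₁.neckV.1 F₂.neckV.1
        (F₁.hcomponent.trans F₂.hcomponent.symm) heq F₁.stricth
    · exact hVsub V₂ V₁ h₂ h₁ F₂.neckV.1 F₁.neckV.1
        (F₂.hcomponent.trans F₁.hcomponent.symm) (fun i hi => (heq i hi).symm) F₂.stricth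
end

section
/- For integers n and a necklace (T,p), the degree-n component of the dg complex of T is free on injective necklace maps into T of dimension n, i.e. dg(T)_n ≅ ⊕_{g: U ↪ T injective, dim(U)=n} k·g, and with the differential ∂_n(g) = Σ_{j=1}^n (-1)^{j-1} (g∘δ_{i_j} − g∘ν_{i_j, q−i_j}) (where U^c = {i_1 < ... < i_n}), one has ∂_{n-1} ∘ ∂_n = 0, i.e. (dg(T)_•, ∂) is a chain complex of k-modules. -/
namespace Idx

variable {p : ℕ} {T : Finset ℕ} {n : ℕ}

/-- The face `g ∘ δ_{i_j}` of an injective necklace map, removing the vertex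
`i ∈ V \ W`. -/
def face (x : Idx p T (n + 1)) (i : ℕ) (hi : i ∈ x.V \ x.W) : Idx p T n where
  V := x.V.erase i
  W := x.W
  hTW := x.hTW
  hWV := Finset.subset_erase.mpr ⟨x.hWV, (Finset.mem_sdiff.mp hi).2⟩
  hV := fun a ha => x.hV (Finset.mem_of_mem_erase ha)
  h0 := x.h0
  hp := x.hp
  hdim := by
    have h1 : x.V.erase i \ x.W = (x.V \ x.W).erase i := by
      ext a
      simp only [Finset.mem_erase, Finset.mem_sdiff]
      tauto
    rw [h1, Finset.card_erase_of_mem hi, x.hdim]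
    omega

/-- The inert restriction `g ∘ ν` of an injective necklace map, adding the
vertex `i ∈ V \ W` as a joint. -/
def inert (x : Idx p T (n + 1)) (i : ℕ) (hi : i ∈ x.V \ x.W) : Idx p T n where
  V := x.V
  W := insert i x.W
  hTW := x.hTW.trans (Finset.subset_insert _ _)
  hWV := Finset.insert_subset_iff.mpr ⟨(Finset.mem_sdiff.mp hi).1, x.hWV⟩
  hV := x.hV
  h0 := Finset.mem_insert_of_mem x.h0
  hp := Finset.mem_insert_of_mem x.hp
  hdim := by
    have h1 : x.V \ insert i x.W = (x.V \ x.W).erase i := by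
      ext a
      simp only [Finset.mem_erase, Finset.mem_sdiff, Finset.mem_insert]
      tauto
    rw [h1, Finset.card_erase_of_mem hi, x.hdim]
    omega

end Idx

/-- The boundary of a generator: `∂(g) = Σ_{j=1}^{n+1} (-1)^{j-1}
(g ∘ δ_{i_j} - g ∘ ν_{i_j, q - i_j})`, the sum running over the complement
`V \ W = {i_1 < i_2 < …}`. -/
noncomputable def bnd (k : Type*) [CommRing k] {p : ℕ} {T : Finset ℕ} {n : ℕ}
    (x : Idx p T (n + 1)) : Idx p T n →₀ k :=
  ∑ i ∈ (x.V \ x.W).attach,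
    ((-1 : k) ^ ((x.V \ x.W).filter (fun y => y < (i : ℕ))).card) •
      (Finsupp.single (x.face i.1 i.2) (1 : k) -
        Finsupp.single (x.inert i.1 i.2) (1 : k))

/-- The differential `∂ : dg(T)_{n+1} → dg(T)_n` of the dg complex of the
necklace `(T,p)`, where `dg(T)_m` is the free `k`-module on injective necklace
maps into `T` of dimension `m`. -/
noncomputable def Dmap (k : Type*) [CommRing k] (p : ℕ) (T : Finset ℕ) (n : ℕ) :
    (Idx p T (n + 1) →₀ k) →ₗ[k] (Idx p T n →₀ k) :=
  Finsupp.lsum k fun x => LinearMap.toSpanSingleton k _ (bnd k x)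

section Aux

variable {k : Type*} [CommRing k] {p : ℕ} {T : Finset ℕ} {n : ℕ}

lemma Idx.ext' {x y : Idx p T n} (hV : x.V = y.V) (hW : x.W = y.W) : x = y := by
  cases x; cases y; cases hV; cases hW; rfl

/-- The sign attached to `i` in the boundary formula. -/
def sgn (k : Type*) [CommRing k] (S : Finset ℕ) (i : ℕ) : k :=
  (-1 : k) ^ ((S.filter (fun y => y < i)).card)

/-- Total version of a single boundary term. -/
noncomputable def Bt (k : Type*) [CommRing k] {p : ℕ} {T : Finset ℕ} {n : ℕ}
    (x : Idx p T (n + 1)) (i : ℕ) : Idx p T n →₀ k :=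
  if h : i ∈ x.V \ x.W then
    Finsupp.single (x.face i h) (1 : k) - Finsupp.single (x.inert i h) (1 : k)
  else 0

lemma bnd_eq (x : Idx p T (n + 1)) :
    bnd k x = ∑ i ∈ x.V \ x.W, sgn k (x.V \ x.W) i • Bt k x i := by
  rw [← Finset.sum_attach (x.V \ x.W) (fun i => sgn k (x.V \ x.W) i • Bt k x i)]
  unfold bnd
  refine Finset.sum_congr rfl fun i _ => ?_
  rw [Bt, dif_pos i.2]
  rfl

lemma face_cset (x : Idx p T (n + 1)) (i : ℕ) (hi : i ∈ x.V \ x.W) :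
    (x.face i hi).V \ (x.face i hi).W = (x.V \ x.W).erase i := by
  ext a
  simp only [Idx.face, Finset.mem_sdiff, Finset.mem_erase]
  tauto

lemma inert_cset (x : Idx p T (n + 1)) (i : ℕ) (hi : i ∈ x.V \ x.W) :
    (x.inert i hi).V \ (x.inert i hi).W = (x.V \ x.W).erase i := by
  ext a
  simp only [Idx.inert, Finset.mem_sdiff, Finset.mem_erase, Finset.mem_insert]
  tauto

lemma Dmap_single (x : Idx p T (n + 1)) (c : k) :
    Dmap k p T n (Finsupp.single x c) = c • bnd k x := by
  simp [Dmap]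

/-- The `(i,j)` term of `∂∂`. -/
noncomputable def tt (k : Type*) [CommRing k] {p : ℕ} {T : Finset ℕ} {n : ℕ}
    (x : Idx p T (n + 2)) (i j : ℕ) : Idx p T n →₀ k :=
  if h : i ∈ x.V \ x.W then
    (sgn k (x.V \ x.W) i * sgn k ((x.V \ x.W).erase i) j) •
      (Bt k (x.face i h) j - Bt k (x.inert i h) j)
  else 0

lemma DD_single (x : Idx p T (n + 2)) :
    Dmap k p T n (Dmap k p T (n + 1) (Finsupp.single x (1 : k))) =
      ∑ i ∈ x.V \ x.W, ∑ j ∈ (x.V \ x.W).erase i, tt k x i j := by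
  rw [Dmap_single, one_smul, bnd_eq, map_sum]
  refine Finset.sum_congr rfl fun i hi => ?_
  rw [map_smul, Bt, dif_pos hi, map_sub, Dmap_single, Dmap_single, one_smul, one_smul,
    bnd_eq, bnd_eq, face_cset, inert_cset, ← Finset.sum_sub_distrib, Finset.smul_sum]
  refine Finset.sum_congr rfl fun j hj => ?_
  rw [tt, dif_pos hi, ← smul_sub, smul_smul, mul_smul]

lemma sgn_anti_lt {S : Finset ℕ} {i j : ℕ} (hi : i ∈ S) (hj : j ∈ S) (hij : i < j) :
    sgn k S i * sgn k (S.erase i) j = - (sgn k S j * sgn k (S.erase j) i) := by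
  have h1 : (S.erase i).filter (fun y => y < j) = (S.filter (fun y => y < j)).erase i := by
    ext a
    simp only [Finset.mem_filter, Finset.mem_erase]
    tauto
  have h2 : (S.erase j).filter (fun y => y < i) = S.filter (fun y => y < i) := by
    ext a
    simp only [Finset.mem_filter, Finset.mem_erase]
    constructor
    · tauto
    · rintro ⟨ha, hlt⟩; exact ⟨⟨by omega, ha⟩, hlt⟩
  have hmem : i ∈ S.filter (fun y => y < j) := Finset.mem_filter.mpr ⟨hi, hij⟩
  have hb : 1 ≤ (S.filter (fun y => y < j)).card := Finset.card_pos.mpr ⟨i, hmem⟩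
  unfold sgn
  rw [h1, h2, Finset.card_erase_of_mem hmem]
  obtain ⟨c, hc⟩ : ∃ c, (S.filter (fun y => y < j)).card = c + 1 := ⟨(S.filter (fun y => y < j)).card - 1, by omega⟩
  rw [hc, pow_succ]
  simp
  ring

lemma sgn_anti {S : Finset ℕ} {i j : ℕ} (hi : i ∈ S) (hj : j ∈ S) (hij : i ≠ j) :
    sgn k S i * sgn k (S.erase i) j = - (sgn k S j * sgn k (S.erase j) i) := by
  rcases lt_or_gt_of_ne hij with h | h
  · exact sgn_anti_lt hi hj h
  · rw [sgn_anti_lt hj hi h, neg_neg]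

lemma face_face (x : Idx p T (n + 2)) (i j : ℕ) (hi : i ∈ x.V \ x.W)
    (hj : j ∈ x.V \ x.W) (h1 : j ∈ (x.face i hi).V \ (x.face i hi).W)
    (h2 : i ∈ (x.face j hj).V \ (x.face j hj).W) :
    (x.face i hi).face j h1 = (x.face j hj).face i h2 :=
  Idx.ext' Finset.erase_right_comm rfl

lemma face_inert (x : Idx p T (n + 2)) (i j : ℕ) (hi : i ∈ x.V \ x.W)
    (hj : j ∈ x.V \ x.W) (h1 : j ∈ (x.face i hi).V \ (x.face i hi).W)
    (h2 : i ∈ (x.inert j hj).V \ (x.inert j hj).W) :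
    (x.face i hi).inert j h1 = (x.inert j hj).face i h2 :=
  Idx.ext' rfl rfl

lemma inert_inert (x : Idx p T (n + 2)) (i j : ℕ) (hi : i ∈ x.V \ x.W)
    (hj : j ∈ x.V \ x.W) (h1 : j ∈ (x.inert i hi).V \ (x.inert i hi).W)
    (h2 : i ∈ (x.inert j hj).V \ (x.inert j hj).W) :
    (x.inert i hi).inert j h1 = (x.inert j hj).inert i h2 :=
  Idx.ext' rfl (Finset.insert_comm _ _ _)

lemma tt_anti (x : Idx p T (n + 2)) {i j : ℕ} (hi : i ∈ x.V \ x.W)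
    (hj : j ∈ x.V \ x.W) (hij : i ≠ j) : tt k x i j = - tt k x j i := by
  have hji : j ≠ i := hij.symm
  have hjf : j ∈ (x.face i hi).V \ (x.face i hi).W := by
    rw [face_cset]; exact Finset.mem_erase.mpr ⟨hji, hj⟩
  have hji' : j ∈ (x.inert i hi).V \ (x.inert i hi).W := by
    rw [inert_cset]; exact Finset.mem_erase.mpr ⟨hji, hj⟩
  have hif : i ∈ (x.face j hj).V \ (x.face j hj).W := by
    rw [face_cset]; exact Finset.mem_erase.mpr ⟨hij, hi⟩
  have hii' : i ∈ (x.inert j hj).V \ (x.inert j hj).W := by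
    rw [inert_cset]; exact Finset.mem_erase.mpr ⟨hij, hi⟩
  rw [tt, tt, dif_pos hi, dif_pos hj, Bt, Bt, Bt, Bt,
    dif_pos hjf, dif_pos hji', dif_pos hif, dif_pos hii',
    face_face x i j hi hj hjf hif, face_inert x i j hi hj hjf hii',
    face_inert x j i hj hi hif hji', inert_inert x i j hi hj hji' hii',
    sgn_anti hi hj hij, neg_smul, neg_inj]
  congr 1
  abel

lemma sum_erase_antisym {M : Type*} [AddCommGroup M] (S : Finset ℕ) (t : ℕ → ℕ → M)
    (h : ∀ i ∈ S, ∀ j ∈ S, i ≠ j → t i j = - t j i) :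
    ∑ i ∈ S, ∑ j ∈ S.erase i, t i j = 0 := by
  have step : ∀ i, ∑ j ∈ S.erase i, t i j = ∑ j ∈ S, if j ≠ i then t i j else 0 := by
    intro i
    rw [← Finset.filter_ne' S i, Finset.sum_filter]
  simp_rw [step]
  rw [← Finset.sum_product' S S (fun i j => if j ≠ i then t i j else 0)]
  refine Finset.sum_involution (fun a _ => (a.2, a.1)) ?_ ?_ (fun a ha => ?_) (fun a ha => rfl)
  · intro a ha
    by_cases hne : a.2 ≠ a.1
    · rw [if_pos hne, if_pos (Ne.symm hne),
        h a.1 (Finset.mem_product.mp ha).1 a.2 (Finset.mem_product.mp ha).2 (Ne.symm hne)]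
      abel
    · rw [if_neg hne, if_neg (fun hc => hne (Ne.symm hc))]
      exact add_zero 0
  · intro a ha hfa
    intro hc
    apply hfa
    have : a.2 = a.1 := congrArg Prod.fst hc
    rw [if_neg (by simp [this])]
  · rw [Finset.mem_product] at ha ⊢
    exact ⟨ha.2, ha.1⟩

end Aux

/-- The dg complex of a necklace: `dg(T)_n` is free on the injective necklace
maps `g : U ↪ T` with `dim U = n`, with differential
`∂(g) = Σ_{j=1}^n (-1)^{j-1}(g ∘ δ_{i_j} - g ∘ ν_{i_j,q-i_j})`, and
`∂ ∘ ∂ = 0`, i.e. `(dg(T)_•, ∂)` is a chain complex of `k`-modules. -/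

theorem dg_is_chain_complex
    (k : Type*) [CommRing k] (p : ℕ) (T : Finset ℕ) (hT : IsNeck p T) :
    (∀ n : ℕ, Nonempty (Module.Basis (Idx p T n) k (Idx p T n →₀ k))) ∧
    (∀ (n : ℕ) (x : Idx p T (n + 2) →₀ k),
      Dmap k p T n (Dmap k p T (n + 1) x) = 0) := by
  constructor
  · intro n
    exact ⟨Finsupp.basisSingleOne⟩
  · intro n
    suffices h : (Dmap k p T n).comp (Dmap k p T (n + 1)) = 0 by
      intro x
      have := LinearMap.congr_fun h x
      simpa using this
    apply Finsupp.lhom_ext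
    intro a b
    have hb : (Finsupp.single a b : Idx p T (n + 2) →₀ k) = b • Finsupp.single a 1 := by
      rw [Finsupp.smul_single, smul_eq_mul, mul_one]
    simp only [LinearMap.comp_apply, LinearMap.zero_apply, hb, map_smul]
    rw [DD_single, sum_erase_antisym _ _ (fun i hi j hj hij => tt_anti a hi hj hij),
      smul_zero]
end

section
/- For the simplicial circle S¹ (the coequalizer of the two coface maps Δ⁰ ⇉ Δ¹) with unique vertex *, and for each n > 0, there is a bijection between the set ⨿_{p ≥ 0} {monotone maps f: [n] → [p] with f(0) = 0 and f(n) = p} and the set ⨿_{T ∈ Nec, f: Δⁿ → T in overline{Nec}₋} (S¹)^{nd}_T(*,*), where (S¹)^{nd}_T(*,*) is nonempty (and then a singleton) if and only if T is a spine. -/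
/-- The set of non-degenerate `m`-simplices of the simplicial circle `S¹`
(coequalizer of the two coface maps `Δ⁰ ⇉ Δ¹`): the vertex `*` in dimension 0,
the edge `e` in dimension 1, and nothing above. -/
def NondegS1 : ℕ → Type
  | 0 => PUnit
  | 1 => PUnit
  | _ + 2 => Empty

/-- A totally non-degenerate bipointed map `T → (S¹)_{*,*}` for a necklace
`(T,p)`: each bead (interval between consecutive joints `a < b` of `T`) is sent
to a non-degenerate simplex of `S¹` of dimension `b - a`. -/
def TotNonDeg (p : ℕ) (T : Finset ℕ) : Type :=
  ∀ a b : ℕ, a ∈ T → b ∈ T → a < b → (∀ c ∈ T, c ≤ a ∨ b ≤ c) → NondegS1 (b - a)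
instance nondegSub (m : ℕ) : Subsingleton (NondegS1 m) := by
  match m with
  | 0 => exact ⟨fun a b => rfl⟩
  | 1 => exact ⟨fun a b => rfl⟩
  | _ + 2 => exact ⟨fun a => a.elim⟩

instance totSub (p : ℕ) (T : Finset ℕ) : Subsingleton (TotNonDeg p T) := by
  unfold TotNonDeg; infer_instance

def spineTot (p : ℕ) : TotNonDeg p (Finset.range (p + 1)) := fun a b ha hb hab hsep => by
  simp only [Finset.mem_range] at ha hb
  have h1 : a + 1 ∈ Finset.range (p + 1) := by simp; omega
  have := hsep (a + 1) h1
  have hb1 : b - a = 1 := by omega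
  rw [hb1]; exact PUnit.unit

theorem spine_of_nonempty (p : ℕ) (T : Finset ℕ) (hT : IsNeck p T)
    (t : TotNonDeg p T) : T = Finset.range (p + 1) := by
  obtain ⟨hsub, h0, hp⟩ := hT
  apply Finset.Subset.antisymm hsub
  intro k hk
  simp only [Finset.mem_range] at hk
  by_contra hkT
  have hk0 : k ≠ 0 := fun h => hkT (h ▸ h0)
  have hkp : k ≠ p := fun h => hkT (h ▸ hp)
  set A := T.filter (· < k) with hA
  set B := T.filter (k < ·) with hB
  have hAne : A.Nonempty := ⟨0, by simp [hA, h0]; omega⟩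
  have hBne : B.Nonempty := ⟨p, by simp [hB, hp]; omega⟩
  set a := A.max' hAne
  set b := B.min' hBne
  have haA : a ∈ A := A.max'_mem hAne
  have hbB : b ∈ B := B.min'_mem hBne
  have haT : a ∈ T := (Finset.mem_filter.mp haA).1
  have hbT : b ∈ T := (Finset.mem_filter.mp hbB).1
  have hak : a < k := (Finset.mem_filter.mp haA).2
  have hkb : k < b := (Finset.mem_filter.mp hbB).2
  have hsep : ∀ c ∈ T, c ≤ a ∨ b ≤ c := by
    intro c hc
    rcases lt_trichotomy c k with h | h | h
    · exact Or.inl (A.le_max' c (by simp [hA, hc, h]))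
    · exact absurd (h ▸ hc) hkT
    · exact Or.inr (B.min'_le c (by simp [hB, hc, h]))
  have t2 := t a b haT hbT (by omega) hsep
  obtain ⟨m, hm⟩ : ∃ m, b - a = m + 2 := ⟨b - a - 2, by omega⟩
  rw [hm] at t2
  exact t2.elim

/-- For the simplicial circle `S¹` with unique vertex `*` and each `n > 0`:
`(S¹)^{nd}_T(*,*)` is nonempty iff `T` is a spine (and then a singleton), and
there is a bijection
`⨿_{p≥0} {monotone f : [n]→[p], f(0)=0, f(n)=p} ≃
 ⨿_{T ∈ Nec, f : Δⁿ → T in overline{Nec}₋} (S¹)^{nd}_T(*,*)`. -/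
theorem simplicial_circle_free_frobenius
    (n : ℕ) (hn : 0 < n) :
    (∀ (p : ℕ) (T : Finset ℕ), IsNeck p T →
        (Nonempty (TotNonDeg p T) ↔ T = Finset.range (p + 1))) ∧
    (∀ (p : ℕ) (T : Finset ℕ), IsNeck p T → T = Finset.range (p + 1) →
        Subsingleton (TotNonDeg p T)) ∧
    Nonempty
      ((Σ p : ℕ, {f : Fin (n + 1) →o Fin (p + 1) //
          f 0 = 0 ∧ f (Fin.last n) = Fin.last p}) ≃
       (Σ p : ℕ, Σ T : {T : Finset ℕ // IsNeck p T},
          {f : Fin (n + 1) →o Fin (p + 1) //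
              f 0 = 0 ∧ f (Fin.last n) = Fin.last p ∧
              ∀ j : Fin (p + 1), (j : ℕ) ∈ T.1 ∨ ∃ i, f i = j} ×
            TotNonDeg p T.1)) := by
  refine ⟨fun p T hT => ⟨fun ⟨t⟩ => spine_of_nonempty p T hT t,
      fun h => h ▸ ⟨spineTot p⟩⟩, fun p T _ _ => inferInstance, ⟨?_⟩⟩
  have hneck : ∀ p, IsNeck p (Finset.range (p + 1)) :=
    fun p => ⟨Finset.Subset.refl _, by simp, by simp⟩
  refine
    { toFun := fun x => ⟨x.1, ⟨Finset.range (x.1 + 1), hneck x.1⟩,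
        ⟨⟨x.2.1, x.2.2.1, x.2.2.2, fun j => Or.inl (by simp [j.isLt])⟩, spineTot x.1⟩⟩
      invFun := fun x => ⟨x.1, ⟨x.2.2.1.1, x.2.2.1.2.1, x.2.2.1.2.2.1⟩⟩
      left_inv := fun x => rfl
      right_inv := ?_ }
  rintro ⟨p, ⟨T, hT⟩, g, t⟩
  have hTe : T = Finset.range (p + 1) := spine_of_nonempty p T hT t
  subst hTe
  simp only
  congr 1
  congr 1
  refine Prod.ext (Subtype.ext rfl) (Subsingleton.elim _ _)
end

section
/- In the category of cubes with connections, for 1 ≤ j ≤ n−1 the connection satisfies the simplicial-style identities making dim a functor: dim(σ_k: Δ^{p+1} → Δ^p) = γ_k for 0 < k < p, dim(σ_0) = σ_1 and dim(σ_p) = σ_p as maps [1]^p → [1]^{p−1}; explicitly, the map P_{Δ^{p+1}} → P_{Δ^p}, V ↦ σ_k(V), corresponds under the identification P_{Δ^m} ≅ [1]^{m−1} to the connection γ_k: [1]^p → [1]^{p−1}, (ε_1,...,ε_p) ↦ (ε_1,...,max(ε_k,ε_{k+1}),...,ε_p), for 0 < k < p. -/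
/-- The underlying map of the codegeneracy `σ_k : [p+1] → [p]` (identifying `k` and
`k+1`). -/
def sigmaMap (k : ℕ) : ℕ → ℕ := fun x => if x ≤ k then x else x - 1

lemma mem_image_sigmaMap (k j : ℕ) (V : Finset ℕ) :
    j ∈ V.image (sigmaMap k) ↔ (j ≤ k ∧ j ∈ V) ∨ (k ≤ j ∧ j + 1 ∈ V) := by
  simp only [Finset.mem_image, sigmaMap]
  constructor
  · rintro ⟨x, hx, hfx⟩
    split at hfx
    · exact Or.inl ⟨by omega, hfx ▸ hx⟩
    · refine Or.inr ⟨by omega, ?_⟩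
      rwa [show j + 1 = x by omega]
  · rintro (⟨h, hm⟩ | ⟨h, hm⟩)
    · exact ⟨j, hm, by simp [h]⟩
    · exact ⟨j + 1, hm, by simp only [if_neg (by omega : ¬ j + 1 ≤ k)]; omega⟩

/-- Under the identification `P_{Δ^m} ≅ [1]^{m-1}` (via the complement
`{1,…,m-1}`, coordinate `j ↔ (j ∈ V)`), the induced map
`P_{Δ^{p+1}} → P_{Δ^p}, V ↦ σ_k(V)` corresponds to the connection
`γ_k : [1]^p → [1]^{p-1}` for `0 < k < p`, to the cubical degeneracy `σ_1`
(deleting the first coordinate) for `k = 0`, and to `σ_p` (deleting the last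
coordinate) for `k = p`. -/
theorem dim_of_codegeneracy
    (p : ℕ) (hp : 0 < p) (V : Finset ℕ)
    (hV1 : ({0, p + 1} : Finset ℕ) ⊆ V) (hV2 : V ⊆ Finset.range (p + 2)) :
    (∀ k, 0 < k → k < p → ∀ j, 1 ≤ j → j ≤ p - 1 →
      (j ∈ V.image (sigmaMap k) ↔
        (if j < k then j ∈ V else if j = k then (k ∈ V ∨ k + 1 ∈ V) else j + 1 ∈ V))) ∧
    (∀ j, 1 ≤ j → j ≤ p - 1 → (j ∈ V.image (sigmaMap 0) ↔ j + 1 ∈ V)) ∧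
    (∀ j, 1 ≤ j → j ≤ p - 1 → (j ∈ V.image (sigmaMap p) ↔ j ∈ V)) := by
  refine ⟨?_, ?_, ?_⟩
  · intro k hk1 hk2 j hj1 hj2
    rw [mem_image_sigmaMap]
    split_ifs with h1 h2
    · constructor
      · rintro (⟨_, h⟩ | ⟨h, _⟩) <;> [exact h; omega]
      · exact fun h => Or.inl ⟨by omega, h⟩
    · subst h2
      constructor
      · rintro (⟨_, h⟩ | ⟨_, h⟩) <;> [exact Or.inl h; exact Or.inr h]
      · rintro (h | h) <;> [exact Or.inl ⟨le_refl _, h⟩; exact Or.inr ⟨le_refl _, h⟩]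
    · constructor
      · rintro (⟨h, _⟩ | ⟨_, h⟩) <;> [omega; exact h]
      · exact fun h => Or.inr ⟨by omega, h⟩
  · intro j hj1 hj2
    rw [mem_image_sigmaMap]
    constructor
    · rintro (⟨h, _⟩ | ⟨_, h⟩) <;> [omega; exact h]
    · exact fun h => Or.inr ⟨by omega, h⟩
  · intro j hj1 hj2
    rw [mem_image_sigmaMap]
    constructor
    · rintro (⟨_, h⟩ | ⟨h, _⟩) <;> [exact h; omega]
    · exact fun h => Or.inl ⟨by omega, h⟩
end
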